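/- arXiv:1901.07472 — 7 statements merged into one kernel-verified Lean document; each statement's English description precedes it below -/
import Mathlib

section
/- Define the weight w on (0,∞) by w(x)=1 for 0<x≤1 and w(x)=e^{−x} for x>1. Then: (a) sup_{r>0} (∫_r^∞ w(x)x^{−2} dx)(∫₀^r w(x)^{−1} dx) < ∞, so w satisfies Muckenhoupt's necessary and sufficient condition for the Hardy operator H₁f(x)=x^{−1}∫₀^x f(y)dy to be bounded on L²(w); but (b) sup_{r>0} (r^{−1}∫₀^r w(x)dx)(r^{−1}∫₀^r w(x)^{−1} dx) = ∞, i.e., w does not belong to A_{2,0}. -/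
open MeasureTheory Set ENNReal Real

noncomputable section

/-- ENNReal-valued Luxemburg norm over `(0,∞)` for `ℝ≥0∞`-valued functions. -/
def eLux (p : ℝ → ℝ) (g : ℝ → ℝ≥0∞) : ℝ≥0∞ :=
  sInf {μ : ℝ≥0∞ | 0 < μ ∧ ∫⁻ x in Ioi (0:ℝ), (g x / μ) ^ (p x) ≤ 1}

/-- Luxemburg norm for real-valued functions on `(0,∞)`. -/
def lux (p : ℝ → ℝ) (f : ℝ → ℝ) : ℝ≥0∞ :=
  eLux p (fun x => ENNReal.ofReal |f x|)

/-- pointwise conjugate exponent, `1/p(x) + 1/p'(x) = 1` -/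
def conj (p : ℝ → ℝ) : ℝ → ℝ := fun x => p x / (p x - 1)

/-- `p(·) ∈ P(0,∞)`: measurable exponent with values in `[1,∞)` and `p⁺ < ∞`. -/
def IsExponent (p : ℝ → ℝ) : Prop :=
  Measurable p ∧ (∀ x ∈ Ioi (0:ℝ), 1 ≤ p x) ∧ BddAbove (p '' Ioi (0:ℝ))

def pMinus (p : ℝ → ℝ) : ℝ := sInf (p '' Ioi (0:ℝ))
def pPlus (p : ℝ → ℝ) : ℝ := sSup (p '' Ioi (0:ℝ))
def pMinusOn (p : ℝ → ℝ) (E : Set ℝ) : ℝ := sInf (p '' E)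
def pPlusOn (p : ℝ → ℝ) (E : Set ℝ) : ℝ := sSup (p '' E)

/-- log-Hölder continuity at the origin. -/
def LH0 (p : ℝ → ℝ) : Prop :=
  ∃ C₀ > (0:ℝ), ∃ p₀ ≥ (1:ℝ), ∀ x ∈ Ioo (0:ℝ) (1/2 : ℝ), |p x - p₀| ≤ C₀ / (-Real.log x)

/-- log-Hölder continuity at infinity with given limit `pinf`. -/
def LHinfWith (p : ℝ → ℝ) (pinf : ℝ) : Prop :=
  ∃ C > (0:ℝ), ∀ x ∈ Ioi (0:ℝ), |p x - pinf| ≤ C / Real.log (Real.exp 1 + x)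

/-- log-Hölder continuity at infinity. -/
def LHinf (p : ℝ → ℝ) : Prop := ∃ pinf ≥ (1:ℝ), LHinfWith p pinf

/-- a weight on `(0,∞)`: non-negative, locally integrable, a.e. positive and finite. -/
def IsWeight (w : ℝ → ℝ) : Prop :=
  Measurable w ∧ (∀ x ∈ Ioi (0:ℝ), 0 ≤ w x) ∧
    (∀ᵐ x ∂(volume.restrict (Ioi (0:ℝ))), 0 < w x) ∧
    LocallyIntegrableOn w (Ioi (0:ℝ))

/-- the class `A_{p(·),q(·),0}` with parameter `λ`. -/
def Apq0 (p q : ℝ → ℝ) (lam : ℝ) (w : ℝ → ℝ) : Prop :=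
  ∃ C > (0:ℝ), ∀ b > (0:ℝ),
    lux q (indicator (Ioo (0:ℝ) b) w) *
      lux (conj p) (indicator (Ioo (0:ℝ) b) (fun y => (w y)⁻¹))
    ≤ ENNReal.ofReal (C * b ^ lam)

/-- the class `A_{p(·),0}`. -/
def Ap0 (p : ℝ → ℝ) (w : ℝ → ℝ) : Prop := Apq0 p p 1 w

/-- the maximal operator `N`. -/
def opN (f : ℝ → ℝ) (x : ℝ) : ℝ≥0∞ :=
  ⨆ (b : ℝ) (_ : x < b), (∫⁻ y in Ioo (0:ℝ) b, ENNReal.ofReal |f y|) / ENNReal.ofReal b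

/-- the generalized Stieltjes transform `S_λ`. -/
def opS (lam : ℝ) (f : ℝ → ℝ) (x : ℝ) : ℝ≥0∞ :=
  ∫⁻ y in Ioi (0:ℝ), ENNReal.ofReal (|f y| / (x + y) ^ lam)

/-- the Hardy operator `H_λ`. -/
def opH (lam : ℝ) (f : ℝ → ℝ) (x : ℝ) : ℝ≥0∞ :=
  (∫⁻ y in Ioo (0:ℝ) x, ENNReal.ofReal |f y|) / ENNReal.ofReal (x ^ lam)

/-- the adjoint Hardy operator `H*_λ`. -/
def opHstar (lam : ℝ) (f : ℝ → ℝ) (x : ℝ) : ℝ≥0∞ :=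
  ∫⁻ y in Ioi x, ENNReal.ofReal (|f y| / y ^ lam)

/-- the generalized Calderón operator `𝒞_λ = H_λ + H*_λ`. -/
def opC (lam : ℝ) (f : ℝ → ℝ) (x : ℝ) : ℝ≥0∞ := opH lam f x + opHstar lam f x

/-- the operator `𝒞^α`, sum of the Riemann–Liouville and Weyl averaging operators. -/
def opCalpha (α : ℝ) (f : ℝ → ℝ) (t : ℝ) : ℝ≥0∞ :=
  ENNReal.ofReal (α + 1) *
      ((∫⁻ x in Ioo (0:ℝ) t, ENNReal.ofReal ((t - x) ^ α * |f x|)) /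
        ENNReal.ofReal (t ^ (α + 1)))
    + ENNReal.ofReal (α + 1) *
        ∫⁻ x in Ioi t, ENNReal.ofReal ((x - t) ^ α / x ^ (α + 1) * |f x|)

/-- the operator `S^α`. -/
def opSalpha (α : ℝ) (f : ℝ → ℝ) (x : ℝ) : ℝ≥0∞ :=
  ∫⁻ t in Ioi (0:ℝ), ENNReal.ofReal (|x - t| ^ α / (x + t) ^ (α + 1) * |f t|)

/-- `T` is of strong type `(p(·),q(·))` with respect to `w`. -/
def StrongType (p q : ℝ → ℝ) (w : ℝ → ℝ) (T : (ℝ → ℝ) → ℝ → ℝ≥0∞) : Prop :=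
  ∃ K > (0:ℝ), ∀ f : ℝ → ℝ, Measurable f → lux p (fun x => f x * w x) ≠ ∞ →
    eLux q (fun x => T f x * ENNReal.ofReal (w x)) ≤
      ENNReal.ofReal K * lux p (fun x => f x * w x)

/-- `T` is of weak type `(p(·),q(·))` with respect to `w`. -/
def WeakType (p q : ℝ → ℝ) (w : ℝ → ℝ) (T : (ℝ → ℝ) → ℝ → ℝ≥0∞) : Prop :=
  ∃ K > (0:ℝ), ∀ f : ℝ → ℝ, Measurable f → lux p (fun x => f x * w x) ≠ ∞ →
    ∀ μ : ℝ, 0 < μ →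
      ENNReal.ofReal μ *
          lux q (indicator {x | ENNReal.ofReal μ < T f x} w) ≤
        ENNReal.ofReal K * lux p (fun x => f x * w x)

/-- the weight `w(x) = 1` for `0 < x ≤ 1`, `w(x) = e^{-x}` for `x > 1`. -/
def w5 : ℝ → ℝ := fun x => if x ≤ 1 then 1 else Real.exp (-x)


private lemma lint_ofReal_le (s : Set ℝ) (hs : MeasurableSet s) (f g : ℝ → ℝ)
    (hfg : ∀ x ∈ s, f x ≤ g x) (hg0 : ∀ x ∈ s, 0 ≤ g x) (hg : IntegrableOn g s) :
    ∫⁻ x in s, ENNReal.ofReal (f x) ≤ ENNReal.ofReal (∫ x in s, g x) := by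
  rw [ofReal_integral_eq_lintegral_ofReal hg
    ((ae_restrict_iff' hs).2 (Filter.Eventually.of_forall hg0))]
  exact lintegral_mono_ae ((ae_restrict_iff' hs).2
    (Filter.Eventually.of_forall fun x hx => ENNReal.ofReal_le_ofReal (hfg x hx)))

private lemma lint_ofReal_eq (s : Set ℝ) (hs : MeasurableSet s) (f g : ℝ → ℝ)
    (hfg : ∀ x ∈ s, f x = g x) (hg0 : ∀ x ∈ s, 0 ≤ g x) (hg : IntegrableOn g s) :
    ∫⁻ x in s, ENNReal.ofReal (f x) = ENNReal.ofReal (∫ x in s, g x) := by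
  rw [ofReal_integral_eq_lintegral_ofReal hg
    ((ae_restrict_iff' hs).2 (Filter.Eventually.of_forall hg0))]
  exact setLIntegral_congr_fun hs (fun x hx => by rw [hfg x hx])

private lemma w5_le_one (x : ℝ) : w5 x ≤ 1 := by
  unfold w5; split
  · exact le_refl 1
  · exact Real.exp_le_one_iff.2 (by linarith [not_le.1 (by assumption)])

private lemma intOn_exp (a b : ℝ) : IntegrableOn Real.exp (Ioo a b) :=
  (Real.continuous_exp.integrableOn_Icc).mono_set Ioo_subset_Icc_self

private lemma int_exp_Ioo {a b : ℝ} (h : a ≤ b) :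
    (∫ x in Ioo a b, Real.exp x) = Real.exp b - Real.exp a := by
  rw [← integral_Ioc_eq_integral_Ioo, ← intervalIntegral.integral_of_le h, integral_exp]

example : True := trivial

theorem statement5 :
    (∃ C : ℝ, ∀ r > (0:ℝ),
        (∫⁻ x in Ioi r, ENNReal.ofReal (w5 x / x ^ 2)) *
          (∫⁻ x in Ioo (0:ℝ) r, ENNReal.ofReal (w5 x)⁻¹) ≤ ENNReal.ofReal C) ∧
    (∀ C : ℝ, ∃ r > (0:ℝ),
        ENNReal.ofReal C <
          ((∫⁻ x in Ioo (0:ℝ) r, ENNReal.ofReal (w5 x)) / ENNReal.ofReal r) *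
            ((∫⁻ x in Ioo (0:ℝ) r, ENNReal.ofReal (w5 x)⁻¹) / ENNReal.ofReal r)) := by
  constructor
  · refine ⟨1, fun r hr => ?_⟩
    by_cases hr1 : r ≤ 1
    · have hA : (∫⁻ x in Ioi r, ENNReal.ofReal (w5 x / x ^ 2)) ≤ ENNReal.ofReal r⁻¹ := by
        have hval : (∫ x in Ioi r, x ^ (-2:ℝ)) = r⁻¹ := by
          rw [integral_Ioi_rpow_of_lt (by norm_num) hr]
          rw [show (-2:ℝ)+1 = -1 by norm_num, Real.rpow_neg_one]
          ring
        rw [← hval]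
        refine lint_ofReal_le _ measurableSet_Ioi _ _ ?_ ?_
          (integrableOn_Ioi_rpow_of_lt (by norm_num) hr)
        · intro x hx
          have hx0 : 0 < x := hr.trans hx
          have hxr : x ^ (-2:ℝ) = (x^2)⁻¹ := by
            rw [Real.rpow_neg hx0.le, show (2:ℝ) = ((2:ℕ):ℝ) by norm_num,
              Real.rpow_natCast]
          rw [hxr, ← one_div]
          have h2 : (0:ℝ) < x^2 := by positivity
          exact div_le_div_of_nonneg_right (w5_le_one x) h2.le
        · intro x hx
          exact Real.rpow_nonneg (le_of_lt (hr.trans hx)) _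
      have hB : (∫⁻ x in Ioo (0:ℝ) r, ENNReal.ofReal (w5 x)⁻¹) = ENNReal.ofReal r := by
        calc ∫⁻ x in Ioo (0:ℝ) r, ENNReal.ofReal (w5 x)⁻¹
            = ∫⁻ _ in Ioo (0:ℝ) r, 1 := by
              refine setLIntegral_congr_fun measurableSet_Ioo
                (fun x hx => ?_)
              have hw : w5 x = 1 := by unfold w5; rw [if_pos (le_trans hx.2.le hr1)]
              simp [hw]
          _ = ENNReal.ofReal r := by rw [setLIntegral_one, Real.volume_Ioo]; norm_num
      calc (∫⁻ x in Ioi r, ENNReal.ofReal (w5 x / x ^ 2)) *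
            (∫⁻ x in Ioo (0:ℝ) r, ENNReal.ofReal (w5 x)⁻¹)
          ≤ ENNReal.ofReal r⁻¹ * ENNReal.ofReal r := by
            rw [hB]; exact mul_le_mul_left hA _
        _ = ENNReal.ofReal 1 := by
            rw [← ENNReal.ofReal_mul (by positivity), inv_mul_cancel₀ hr.ne']
    · push_neg at hr1
      have hA : (∫⁻ x in Ioi r, ENNReal.ofReal (w5 x / x ^ 2))
          ≤ ENNReal.ofReal (Real.exp (-r)) := by
        rw [← integral_exp_neg_Ioi r]
        refine lint_ofReal_le _ measurableSet_Ioi _ _ ?_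
          (fun x _ => (Real.exp_pos _).le) ?_
        · intro x hx
          have hx1 : (1:ℝ) < x := hr1.trans hx
          have hw : w5 x = Real.exp (-x) := by unfold w5; rw [if_neg (not_le.2 hx1)]
          rw [hw]
          exact div_le_self (Real.exp_pos _).le (by nlinarith)
        · have := exp_neg_integrableOn_Ioi r one_pos
          simpa using this
      have hB : (∫⁻ x in Ioo (0:ℝ) r, ENNReal.ofReal (w5 x)⁻¹)
          ≤ ENNReal.ofReal (Real.exp r - 1) := by
        rw [show Real.exp r - 1 = Real.exp r - Real.exp 0 by simp, ← int_exp_Ioo hr.le]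
        refine lint_ofReal_le _ measurableSet_Ioo _ _ ?_
          (fun x _ => (Real.exp_pos _).le) (intOn_exp 0 r)
        intro x hx
        unfold w5; split
        · simpa using Real.one_le_exp hx.1.le
        · rw [Real.exp_neg, inv_inv]
      calc (∫⁻ x in Ioi r, ENNReal.ofReal (w5 x / x ^ 2)) *
            (∫⁻ x in Ioo (0:ℝ) r, ENNReal.ofReal (w5 x)⁻¹)
          ≤ ENNReal.ofReal (Real.exp (-r)) * ENNReal.ofReal (Real.exp r - 1) :=
            mul_le_mul' hA hB
        _ ≤ ENNReal.ofReal 1 := by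
            rw [← ENNReal.ofReal_mul (Real.exp_pos _).le]
            refine ENNReal.ofReal_le_ofReal ?_
            have h1 : Real.exp (-r) * Real.exp r = 1 := by rw [← Real.exp_add]; simp
            nlinarith [Real.exp_pos (-r)]
  · intro C
    set r : ℝ := max 2 (27*(|C|+3)) with hrdef
    have hr2 : (2:ℝ) ≤ r := le_max_left _ _
    have hr27 : 27*(|C|+3) ≤ r := le_max_right _ _
    have hr0 : (0:ℝ) < r := by linarith
    refine ⟨r, hr0, ?_⟩
    have hexp : r^3/27 ≤ Real.exp r := by
      have h := Real.add_one_le_exp (r/3)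
      have h3 : Real.exp (r/3) ^ (3:ℕ) = Real.exp r := by
        rw [← Real.exp_nat_mul]
        norm_num
        ring
      have hnn : (0:ℝ) ≤ r/3 := by positivity
      have hpow : (r/3)^(3:ℕ) ≤ Real.exp (r/3) ^ (3:ℕ) :=
        pow_le_pow_left₀ hnn (by linarith) 3
      rw [h3] at hpow
      calc r^3/27 = (r/3)^(3:ℕ) := by ring
        _ ≤ Real.exp r := hpow
    have he : Real.exp 1 < 3 := by linarith [Real.exp_one_lt_d9]
    have hC : |C| * (r*r) + Real.exp 1 < Real.exp r := by
      have h4 : (|C|+3) * (r*r) ≤ r^3/27 := by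
        nlinarith [mul_le_mul_of_nonneg_right hr27 (mul_self_nonneg r), abs_nonneg C]
      nlinarith [abs_nonneg C, hr2]
    have h1 : ENNReal.ofReal 1 ≤ ∫⁻ x in Ioo (0:ℝ) r, ENNReal.ofReal (w5 x) := by
      calc ENNReal.ofReal 1 = ∫⁻ _ in Ioo (0:ℝ) 1, 1 := by
            rw [setLIntegral_one, Real.volume_Ioo]; norm_num
        _ = ∫⁻ x in Ioo (0:ℝ) 1, ENNReal.ofReal (w5 x) := by
            refine setLIntegral_congr_fun measurableSet_Ioo
              (fun x hx => ?_)
            have hw : w5 x = 1 := by unfold w5; rw [if_pos hx.2.le]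
            simp [hw]
        _ ≤ ∫⁻ x in Ioo (0:ℝ) r, ENNReal.ofReal (w5 x) :=
            lintegral_mono_set (Ioo_subset_Ioo le_rfl (by linarith))
    have h2 : ENNReal.ofReal (Real.exp r - Real.exp 1)
        ≤ ∫⁻ x in Ioo (0:ℝ) r, ENNReal.ofReal (w5 x)⁻¹ := by
      have heq : (∫⁻ x in Ioo (1:ℝ) r, ENNReal.ofReal (w5 x)⁻¹)
          = ENNReal.ofReal (Real.exp r - Real.exp 1) := by
        rw [← int_exp_Ioo (by linarith : (1:ℝ) ≤ r)]
        refine lint_ofReal_eq _ measurableSet_Ioo _ _ ?_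
          (fun x _ => (Real.exp_pos _).le) (intOn_exp 1 r)
        intro x hx
        have hw : w5 x = Real.exp (-x) := by unfold w5; rw [if_neg (not_le.2 hx.1)]
        rw [hw, Real.exp_neg, inv_inv]
      rw [← heq]
      exact lintegral_mono_set (Ioo_subset_Ioo (by linarith) le_rfl)
    have hlow : ENNReal.ofReal (1/r * ((Real.exp r - Real.exp 1)/r))
        ≤ ((∫⁻ x in Ioo (0:ℝ) r, ENNReal.ofReal (w5 x)) / ENNReal.ofReal r) *
          ((∫⁻ x in Ioo (0:ℝ) r, ENNReal.ofReal (w5 x)⁻¹) / ENNReal.ofReal r) := by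
      rw [ENNReal.ofReal_mul (by positivity), ENNReal.ofReal_div_of_pos hr0,
        ENNReal.ofReal_div_of_pos hr0]
      exact mul_le_mul' (ENNReal.div_le_div_right h1 _) (ENNReal.div_le_div_right h2 _)
    refine lt_of_lt_of_le ?_ hlow
    have hD : |C| < 1/r * ((Real.exp r - Real.exp 1)/r) := by
      rw [show 1/r * ((Real.exp r - Real.exp 1)/r)
          = (Real.exp r - Real.exp 1)/(r*r) by field_simp]
      rw [lt_div_iff₀ (by positivity)]
      linarith
    rw [ENNReal.ofReal_lt_ofReal_iff (lt_of_le_of_lt (abs_nonneg C) hD)]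
    exact lt_of_le_of_lt (le_abs_self C) hD


end
end

section
/- Let 1<p<∞ and let w be a weight on ℝⁿ such that sup_{b>0} (|B(0,b)|^{−1}∫_{B(0,b)} w dx)(|B(0,b)|^{−1}∫_{B(0,b)} w^{1−p'} dx)^{p−1} < ∞ (the A_{p,0} condition on ℝⁿ), and suppose there exists C₁>0 such that for every k∈ℤ, ess sup_{2^{k−2}≤|x|≤2^{k+1}} w(x) ≤ C₁ ess inf_{2^{k−2}≤|x|≤2^{k+1}} w(x) (w is essentially constant on dyadic annuli). Then w belongs to the Muckenhoupt class A_p, i.e., sup_B (|B|^{−1}∫_B w dx)(|B|^{−1}∫_B w^{1−p'} dx)^{p−1} < ∞, where the supremum is taken over all balls B ⊂ ℝⁿ. -/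
open MeasureTheory Set ENNReal Real

noncomputable section

/-- Euclidean space `ℝⁿ`. -/
abbrev Rn (n : ℕ) := EuclideanSpace ℝ (Fin n)

/-- ENNReal-valued Luxemburg norm on `ℝⁿ` for `ℝ≥0∞`-valued functions. -/
def eLuxRn {n : ℕ} (p : Rn n → ℝ) (g : Rn n → ℝ≥0∞) : ℝ≥0∞ :=
  sInf {μ : ℝ≥0∞ | 0 < μ ∧ ∫⁻ x, (g x / μ) ^ (p x) ≤ 1}

/-- Luxemburg norm for real-valued functions on `ℝⁿ`. -/
def luxRn {n : ℕ} (p : Rn n → ℝ) (f : Rn n → ℝ) : ℝ≥0∞ :=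
  eLuxRn p (fun x => ENNReal.ofReal |f x|)

/-- pointwise conjugate exponent, `1/p(x) + 1/p'(x) = 1`. -/
def conjRn {n : ℕ} (p : Rn n → ℝ) : Rn n → ℝ := fun x => p x / (p x - 1)

/-- `p(·) ∈ P(ℝⁿ)`: measurable exponent with values in `[1,∞)` and `p⁺ < ∞`. -/
def IsExponentRn {n : ℕ} (p : Rn n → ℝ) : Prop :=
  Measurable p ∧ (∀ x, 1 ≤ p x) ∧ BddAbove (Set.range p)

/-- log-Hölder continuity at the origin on `ℝⁿ`. -/
def LH0Rn {n : ℕ} (p : Rn n → ℝ) : Prop :=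
  ∃ C₀ > (0:ℝ), ∃ p₀ ≥ (1:ℝ), ∀ x : Rn n, 0 < ‖x‖ → ‖x‖ < 1/2 →
    |p x - p₀| ≤ C₀ / (-Real.log ‖x‖)

/-- log-Hölder continuity at infinity on `ℝⁿ`. -/
def LHinfRn {n : ℕ} (p : Rn n → ℝ) : Prop :=
  ∃ C > (0:ℝ), ∃ pinf ≥ (1:ℝ), ∀ x : Rn n,
    |p x - pinf| ≤ C / Real.log (Real.exp 1 + ‖x‖)

/-- a weight on `ℝⁿ`: non-negative, locally integrable, a.e. positive and finite. -/
def IsWeightRn {n : ℕ} (w : Rn n → ℝ) : Prop :=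
  Measurable w ∧ (∀ x, 0 ≤ w x) ∧ (∀ᵐ x, 0 < w x) ∧ LocallyIntegrable w

/-- the class `A_{p(·),0}(ℝⁿ)`, defined over the balls centered at the origin. -/
def Ap0Rn {n : ℕ} (p : Rn n → ℝ) (w : Rn n → ℝ) : Prop :=
  ∃ C > (0:ℝ), ∀ b > (0:ℝ),
    luxRn p (indicator (Metric.ball (0 : Rn n) b) w) *
      luxRn (conjRn p) (indicator (Metric.ball (0 : Rn n) b) (fun y => (w y)⁻¹))
    ≤ ENNReal.ofReal (C * b ^ (n : ℕ))

/-- the radial maximal operator `N` on `ℝⁿ`. -/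
def opNRn {n : ℕ} (f : Rn n → ℝ) (x : Rn n) : ℝ≥0∞ :=
  ⨆ (b : ℝ) (_ : ‖x‖ < b),
    (∫⁻ y in Metric.ball (0 : Rn n) b, ENNReal.ofReal |f y|) / ENNReal.ofReal (b ^ (n : ℕ))

/-- the operator `S` on `ℝⁿ`. -/
def opSRn {n : ℕ} (f : Rn n → ℝ) (x : Rn n) : ℝ≥0∞ :=
  ∫⁻ y, ENNReal.ofReal (|f y| / (‖x‖ ^ (n : ℕ) + ‖y‖ ^ (n : ℕ)))

/-- `T` is of strong type `(p(·),p(·))` with respect to `w` on `ℝⁿ`. -/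
def StrongTypeRn {n : ℕ} (p : Rn n → ℝ) (w : Rn n → ℝ)
    (T : (Rn n → ℝ) → Rn n → ℝ≥0∞) : Prop :=
  ∃ K > (0:ℝ), ∀ f : Rn n → ℝ, Measurable f → luxRn p (fun x => f x * w x) ≠ ∞ →
    eLuxRn p (fun x => T f x * ENNReal.ofReal (w x)) ≤
      ENNReal.ofReal K * luxRn p (fun x => f x * w x)

/-- Auxiliary: `rpow` with a nonpositive exponent is antitone on `ℝ≥0∞`. -/
lemma myaux_rpow_anti {a b : ℝ≥0∞} (h : a ≤ b) {z : ℝ} (hz : z ≤ 0) : b ^ z ≤ a ^ z := by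
  have h1 : ∀ x : ℝ≥0∞, x ^ z = (x ^ (-z))⁻¹ := fun x => by
    rw [← ENNReal.rpow_neg, neg_neg]
  rw [h1 b, h1 a]
  exact ENNReal.inv_le_inv.mpr (ENNReal.rpow_le_rpow h (neg_nonneg.mpr hz))

theorem statement6 (n : ℕ) (p : ℝ) (hp : 1 < p) (w : Rn n → ℝ) (hw : IsWeightRn w)
    (hA : ∃ C : ℝ, ∀ b > (0:ℝ),
        ((volume (Metric.ball (0 : Rn n) b))⁻¹ *
            ∫⁻ x in Metric.ball (0 : Rn n) b, ENNReal.ofReal (w x)) *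
          ((volume (Metric.ball (0 : Rn n) b))⁻¹ *
              ∫⁻ x in Metric.ball (0 : Rn n) b,
                ENNReal.ofReal (w x ^ (1 - p / (p - 1)))) ^ (p - 1) ≤
          ENNReal.ofReal C)
    (hann : ∃ C₁ > (0:ℝ), ∀ k : ℤ,
        essSup (fun x => ENNReal.ofReal (w x))
            (volume.restrict {x : Rn n | (2:ℝ) ^ (k - 2) ≤ ‖x‖ ∧ ‖x‖ ≤ (2:ℝ) ^ (k + 1)}) ≤
          ENNReal.ofReal C₁ *
            essInf (fun x => ENNReal.ofReal (w x))
              (volume.restrict {x : Rn n | (2:ℝ) ^ (k - 2) ≤ ‖x‖ ∧ ‖x‖ ≤ (2:ℝ) ^ (k + 1)})) :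
    ∃ C : ℝ, ∀ (c : Rn n) (r : ℝ), 0 < r →
      ((volume (Metric.ball c r))⁻¹ * ∫⁻ x in Metric.ball c r, ENNReal.ofReal (w x)) *
        ((volume (Metric.ball c r))⁻¹ *
            ∫⁻ x in Metric.ball c r, ENNReal.ofReal (w x ^ (1 - p / (p - 1)))) ^ (p - 1) ≤
        ENNReal.ofReal C := by
  obtain ⟨C₀, hC₀⟩ := hA
  obtain ⟨C₁, hC₁pos, hC₁⟩ := hann
  have hp1 : (0:ℝ) < p - 1 := by linarith
  have hpe : (0:ℝ) ≤ p - 1 := hp1.le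
  set e : ℝ := 1 - p / (p - 1) with he
  have he_neg : e ≤ 0 := by
    rw [he, sub_nonpos]
    exact (one_le_div hp1).mpr (by linarith)
  have heq : e * (p - 1) = -1 := by
    rw [he, sub_mul, one_mul, div_mul_cancel₀ _ (ne_of_gt hp1)]; ring
  refine ⟨max ((3:ℝ) ^ (n:ℕ) * ((3:ℝ) ^ (n:ℕ)) ^ (p - 1) * C₀) C₁, ?_⟩
  intro c r hr
  have hμ0 : volume (Metric.ball c r) ≠ 0 := (Metric.measure_ball_pos volume c hr).ne'
  have hμtop : volume (Metric.ball c r) ≠ ∞ := measure_ball_lt_top.ne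
  by_cases hcase : ‖c‖ ≤ 2 * r
  · -- Case 1 : the ball is close to the origin; compare with `ball 0 (3r)`.
    have h3r : (0:ℝ) < 3 * r := by linarith
    have hsub : Metric.ball c r ⊆ Metric.ball (0 : Rn n) (3 * r) := by
      intro x hx
      rw [Metric.mem_ball, dist_eq_norm] at hx
      rw [Metric.mem_ball, dist_eq_norm, sub_zero]
      have h1 : ‖x‖ - ‖c‖ ≤ ‖x - c‖ := (le_abs_self _).trans (abs_norm_sub_norm_le x c)
      linarith
    have h3pos : (0:ℝ) < (3:ℝ) ^ (n:ℕ) := by positivity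
    have ha0 : ENNReal.ofReal ((3:ℝ) ^ (n:ℕ)) ≠ 0 := (ENNReal.ofReal_pos.mpr h3pos).ne'
    have hatop : ENNReal.ofReal ((3:ℝ) ^ (n:ℕ)) ≠ ∞ := ENNReal.ofReal_ne_top
    have hball : ∀ (x : Rn n), ∀ {s : ℝ}, 0 < s → volume (Metric.ball x s)
        = ENNReal.ofReal (s ^ (n:ℕ)) * volume (Metric.ball (0 : Rn n) 1) := by
      intro x s hs
      rw [Measure.addHaar_ball_of_pos volume x hs, finrank_euclideanSpace_fin]
    have hratio : volume (Metric.ball (0 : Rn n) (3 * r))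
        = ENNReal.ofReal ((3:ℝ) ^ (n:ℕ)) * volume (Metric.ball c r) := by
      rw [hball c hr, hball (0 : Rn n) h3r, mul_pow,
        ENNReal.ofReal_mul (by positivity), mul_assoc]
    have hinv : (volume (Metric.ball c r))⁻¹
        = ENNReal.ofReal ((3:ℝ) ^ (n:ℕ)) * (volume (Metric.ball (0 : Rn n) (3 * r)))⁻¹ := by
      rw [hratio, ENNReal.mul_inv (Or.inl ha0) (Or.inl hatop), ← mul_assoc,
        ENNReal.mul_inv_cancel ha0 hatop, one_mul]
    have hIw : (∫⁻ x in Metric.ball c r, ENNReal.ofReal (w x)) ≤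
        ∫⁻ x in Metric.ball (0 : Rn n) (3 * r), ENNReal.ofReal (w x) :=
      lintegral_mono' (Measure.restrict_mono hsub le_rfl) le_rfl
    have hIσ : (∫⁻ x in Metric.ball c r, ENNReal.ofReal (w x ^ e)) ≤
        ∫⁻ x in Metric.ball (0 : Rn n) (3 * r), ENNReal.ofReal (w x ^ e) :=
      lintegral_mono' (Measure.restrict_mono hsub le_rfl) le_rfl
    calc ((volume (Metric.ball c r))⁻¹ * ∫⁻ x in Metric.ball c r, ENNReal.ofReal (w x)) *
          ((volume (Metric.ball c r))⁻¹ *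
            ∫⁻ x in Metric.ball c r, ENNReal.ofReal (w x ^ e)) ^ (p - 1)
        ≤ ((volume (Metric.ball c r))⁻¹ *
              ∫⁻ x in Metric.ball (0 : Rn n) (3 * r), ENNReal.ofReal (w x)) *
          ((volume (Metric.ball c r))⁻¹ *
              ∫⁻ x in Metric.ball (0 : Rn n) (3 * r), ENNReal.ofReal (w x ^ e)) ^ (p - 1) :=
          mul_le_mul' (mul_le_mul_right hIw _)
            (ENNReal.rpow_le_rpow (mul_le_mul_right hIσ _) hpe)
      _ = (ENNReal.ofReal ((3:ℝ) ^ (n:ℕ)) * ENNReal.ofReal ((3:ℝ) ^ (n:ℕ)) ^ (p - 1)) *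
          (((volume (Metric.ball (0 : Rn n) (3 * r)))⁻¹ *
              ∫⁻ x in Metric.ball (0 : Rn n) (3 * r), ENNReal.ofReal (w x)) *
          ((volume (Metric.ball (0 : Rn n) (3 * r)))⁻¹ *
              ∫⁻ x in Metric.ball (0 : Rn n) (3 * r), ENNReal.ofReal (w x ^ e)) ^ (p - 1)) := by
          rw [hinv]
          simp only [ENNReal.mul_rpow_of_nonneg _ _ hpe]
          ring
      _ ≤ (ENNReal.ofReal ((3:ℝ) ^ (n:ℕ)) * ENNReal.ofReal ((3:ℝ) ^ (n:ℕ)) ^ (p - 1)) *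
            ENNReal.ofReal C₀ := mul_le_mul_right (hC₀ (3 * r) h3r) _
      _ = ENNReal.ofReal ((3:ℝ) ^ (n:ℕ) * ((3:ℝ) ^ (n:ℕ)) ^ (p - 1) * C₀) := by
          rw [ENNReal.ofReal_rpow_of_pos h3pos, ← ENNReal.ofReal_mul h3pos.le,
            ← ENNReal.ofReal_mul (by positivity)]
      _ ≤ ENNReal.ofReal
            (max ((3:ℝ) ^ (n:ℕ) * ((3:ℝ) ^ (n:ℕ)) ^ (p - 1) * C₀) C₁) :=
          ENNReal.ofReal_le_ofReal (le_max_left _ _)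
  · -- Case 2 : the ball is far from the origin; it lies in a dyadic annulus.
    push_neg at hcase
    have hc : 0 < ‖c‖ := lt_trans (by linarith) hcase
    set k : ℤ := ⌈Real.logb 2 ‖c‖⌉ with hk
    have hcu : ‖c‖ ≤ (2:ℝ) ^ ((k:ℝ)) := by
      conv_lhs => rw [← Real.rpow_logb two_pos (by norm_num) hc]
      exact Real.rpow_le_rpow_of_exponent_le one_le_two (Int.le_ceil _)
    have hcl : (2:ℝ) ^ ((k:ℝ) - 1) ≤ ‖c‖ := by
      conv_rhs => rw [← Real.rpow_logb two_pos (by norm_num) hc]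
      apply Real.rpow_le_rpow_of_exponent_le one_le_two
      have h := Int.ceil_lt_add_one (Real.logb 2 ‖c‖)
      rw [hk]; linarith
    have hkey := hC₁ k
    set S := {x : Rn n | (2:ℝ) ^ (k - 2) ≤ ‖x‖ ∧ ‖x‖ ≤ (2:ℝ) ^ (k + 1)} with hS
    set M := essSup (fun x => ENNReal.ofReal (w x)) (volume.restrict S) with hMdef
    set m := essInf (fun x => ENNReal.ofReal (w x)) (volume.restrict S) with hmdef
    have hsub : Metric.ball c r ⊆ S := by
      intro x hx
      rw [Metric.mem_ball, dist_eq_norm] at hx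
      have h1 : ‖x‖ - ‖c‖ ≤ ‖x - c‖ := (le_abs_self _).trans (abs_norm_sub_norm_le x c)
      have h2 : ‖c‖ - ‖x‖ ≤ ‖x - c‖ := by
        have := (abs_le.mp (abs_norm_sub_norm_le x c)).1
        linarith
      have ez1 : (2:ℝ) ^ (k - 2 : ℤ) = (2:ℝ) ^ ((k:ℝ) - 2) := by
        rw [← Real.rpow_intCast]; push_cast; ring_nf
      have ez2 : (2:ℝ) ^ (k + 1 : ℤ) = (2:ℝ) ^ ((k:ℝ) + 1) := by
        rw [← Real.rpow_intCast]; push_cast; ring_nf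
      have e2 : (2:ℝ) ^ ((k:ℝ) - 2) = (2:ℝ) ^ ((k:ℝ) - 1) / 2 := by
        rw [show (k:ℝ) - 2 = ((k:ℝ) - 1) - 1 by ring, Real.rpow_sub two_pos, Real.rpow_one]
      have e3 : (2:ℝ) ^ ((k:ℝ) + 1) = (2:ℝ) ^ ((k:ℝ)) * 2 := by
        rw [Real.rpow_add two_pos, Real.rpow_one]
      have hknn : (0:ℝ) ≤ (2:ℝ) ^ ((k:ℝ)) := by positivity
      constructor
      · rw [ez1, e2]; linarith
      · rw [ez2, e3]; linarith
    have hfm : ae (volume.restrict (Metric.ball c r)) ≤ ae (volume.restrict S) :=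
      ae_mono (Measure.restrict_mono hsub le_rfl)
    have haeM : ∀ᵐ x ∂volume.restrict (Metric.ball c r),
        ENNReal.ofReal (w x) ≤ M :=
      (ENNReal.ae_le_essSup (fun x => ENNReal.ofReal (w x))).filter_mono hfm
    have haem : ∀ᵐ x ∂volume.restrict (Metric.ball c r),
        m ≤ ENNReal.ofReal (w x) :=
      (ae_essInf_le (f := fun x => ENNReal.ofReal (w x))
        (μ := volume.restrict S)).filter_mono hfm
    have hposB : ∀ᵐ x ∂volume.restrict (Metric.ball c r), 0 < w x :=
      ae_restrict_of_ae hw.2.2.1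
    have hIw : (∫⁻ x in Metric.ball c r, ENNReal.ofReal (w x)) ≤
        M * volume (Metric.ball c r) := by
      rw [← setLIntegral_const]
      exact lintegral_mono_ae haeM
    have hIσ : (∫⁻ x in Metric.ball c r, ENNReal.ofReal (w x ^ e)) ≤
        m ^ e * volume (Metric.ball c r) := by
      rw [← setLIntegral_const]
      refine lintegral_mono_ae ?_
      filter_upwards [haem, hposB] with x h1 h2
      calc ENNReal.ofReal (w x ^ e) = (ENNReal.ofReal (w x)) ^ e :=
            (ENNReal.ofReal_rpow_of_pos h2).symm
        _ ≤ m ^ e := myaux_rpow_anti h1 he_neg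
    have hcancel : (volume (Metric.ball c r))⁻¹ * volume (Metric.ball c r) = 1 :=
      ENNReal.inv_mul_cancel hμ0 hμtop
    calc ((volume (Metric.ball c r))⁻¹ * ∫⁻ x in Metric.ball c r, ENNReal.ofReal (w x)) *
          ((volume (Metric.ball c r))⁻¹ *
            ∫⁻ x in Metric.ball c r, ENNReal.ofReal (w x ^ e)) ^ (p - 1)
        ≤ ((volume (Metric.ball c r))⁻¹ * (M * volume (Metric.ball c r))) *
          ((volume (Metric.ball c r))⁻¹ *
            (m ^ e * volume (Metric.ball c r))) ^ (p - 1) :=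
          mul_le_mul' (mul_le_mul_right hIw _)
            (ENNReal.rpow_le_rpow (mul_le_mul_right hIσ _) hpe)
      _ = M * (m ^ e) ^ (p - 1) := by
          rw [show (volume (Metric.ball c r))⁻¹ * (M * volume (Metric.ball c r))
              = M * ((volume (Metric.ball c r))⁻¹ * volume (Metric.ball c r)) by ring,
            show (volume (Metric.ball c r))⁻¹ * (m ^ e * volume (Metric.ball c r))
              = m ^ e * ((volume (Metric.ball c r))⁻¹ * volume (Metric.ball c r)) by ring,
            hcancel, mul_one, mul_one]
      _ = M * m⁻¹ := by
          rw [← ENNReal.rpow_mul, heq, ENNReal.rpow_neg_one]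
      _ ≤ (ENNReal.ofReal C₁ * m) * m⁻¹ := mul_le_mul_left hkey _
      _ = ENNReal.ofReal C₁ * (m * m⁻¹) := by ring
      _ ≤ ENNReal.ofReal C₁ * 1 := mul_le_mul_right (ENNReal.mul_inv_le_one m) _
      _ = ENNReal.ofReal C₁ := mul_one _
      _ ≤ ENNReal.ofReal
            (max ((3:ℝ) ^ (n:ℕ) * ((3:ℝ) ^ (n:ℕ)) ^ (p - 1) * C₀) C₁) :=
          ENNReal.ofReal_le_ofReal (le_max_right _ _)

end
end

section
/- Let p(·) ∈ P(0,∞) with p(·) ∈ LH₀(0,∞) and 1 < p⁻ ≤ p⁺ < ∞, and let w be a weight on (0,∞) with w ∈ A_{p(·),0}. Then there exists a constant C₀>0, depending only on p(·) and w, such that for every b>0, ‖wχ_{(0,b)}‖_{p(·)}^{p⁻_{(0,b)} − p⁺_{(0,b)}} ≤ C₀, where p⁻_{(0,b)} = inf_{(0,b)} p and p⁺_{(0,b)} = sup_{(0,b)} p. -/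
open MeasureTheory Set ENNReal Real

noncomputable section

section AuxLemmas

private lemma modular_anti {p : ℝ → ℝ} (hp : ∀ x ∈ Ioi (0:ℝ), 0 ≤ p x)
    (g : ℝ → ℝ≥0∞) {μ ν : ℝ≥0∞} (h : μ ≤ ν) :
    ∫⁻ x in Ioi (0:ℝ), (g x / ν) ^ (p x) ≤ ∫⁻ x in Ioi (0:ℝ), (g x / μ) ^ (p x) := by
  refine lintegral_mono_ae ?_
  filter_upwards [ae_restrict_mem measurableSet_Ioi] with x hx
  exact ENNReal.rpow_le_rpow (ENNReal.div_le_div le_rfl h) (hp x hx)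

private lemma modular_mono {p : ℝ → ℝ} (hp : ∀ x ∈ Ioi (0:ℝ), 0 ≤ p x)
    {g g' : ℝ → ℝ≥0∞} (h : ∀ x, g x ≤ g' x) (μ : ℝ≥0∞) :
    ∫⁻ x in Ioi (0:ℝ), (g x / μ) ^ (p x) ≤ ∫⁻ x in Ioi (0:ℝ), (g' x / μ) ^ (p x) := by
  refine lintegral_mono_ae ?_
  filter_upwards [ae_restrict_mem measurableSet_Ioi] with x hx
  exact ENNReal.rpow_le_rpow (ENNReal.div_le_div (h x) le_rfl) (hp x hx)

private lemma eLux_mono' {p : ℝ → ℝ} (hp : ∀ x ∈ Ioi (0:ℝ), 0 ≤ p x)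
    {g g' : ℝ → ℝ≥0∞} (h : ∀ x, g x ≤ g' x) : eLux p g ≤ eLux p g' := by
  refine sInf_le_sInf ?_
  rintro μ ⟨hμ0, hμ1⟩
  exact ⟨hμ0, le_trans (modular_mono hp h μ) hμ1⟩

private lemma modular_le_of_eLux_lt {p : ℝ → ℝ} (hp : ∀ x ∈ Ioi (0:ℝ), 0 ≤ p x)
    {g : ℝ → ℝ≥0∞} {μ : ℝ≥0∞} (h : eLux p g < μ) :
    ∫⁻ x in Ioi (0:ℝ), (g x / μ) ^ (p x) ≤ 1 := by
  obtain ⟨ν, hν, hνμ⟩ := sInf_lt_iff.mp h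
  exact le_trans (modular_anti hp g hνμ.le) hν.2

private lemma key_bound {x : ℝ≥0∞} {r e B : ℝ} (hr : 0 < r) (he : 0 ≤ e)
    (hx : ENNReal.ofReal r ≤ x) (hB : e * (-Real.log r) ≤ B) :
    x ^ (-e) ≤ ENNReal.ofReal (Real.exp B) := by
  have h1 : x ^ (-e) ≤ (ENNReal.ofReal r) ^ (-e) := by
    rw [ENNReal.rpow_neg, ENNReal.rpow_neg]
    exact ENNReal.inv_le_inv.mpr (ENNReal.rpow_le_rpow hx he)
  refine h1.trans ?_
  rw [ENNReal.ofReal_rpow_of_pos hr]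
  apply ENNReal.ofReal_le_ofReal
  rw [Real.rpow_def_of_pos hr]
  apply Real.exp_le_exp.mpr
  have : Real.log r * (-e) = e * (-Real.log r) := by ring
  linarith

end AuxLemmas

theorem statement9 (p w : ℝ → ℝ) (hp : IsExponent p) (h0 : LH0 p) (hpm : 1 < pMinus p)
    (hw : IsWeight w) (hA : Ap0 p w) :
    ∃ C₀ > (0:ℝ), ∀ b > (0:ℝ),
      (lux p (indicator (Ioo (0:ℝ) b) w)) ^
          (pMinusOn p (Ioo (0:ℝ) b) - pPlusOn p (Ioo (0:ℝ) b)) ≤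
        ENNReal.ofReal C₀ := by
  obtain ⟨hpmeas, hp1, hpbdd⟩ := hp
  obtain ⟨wmeas, hw0, hwpos, _⟩ := hw
  obtain ⟨C, hC, hAb⟩ := hA
  obtain ⟨CL, hCL, p₀, hp₀, hLH⟩ := h0
  -- basic exponent facts
  have hp0 : ∀ x ∈ Ioi (0:ℝ), 0 ≤ p x := fun x hx => le_trans zero_le_one (hp1 x hx)
  have hplt : ∀ x ∈ Ioi (0:ℝ), 1 < p x := fun x hx =>
    lt_of_lt_of_le hpm (csInf_le ⟨1, by rintro y ⟨z, hz, rfl⟩; exact hp1 z hz⟩ ⟨x, hx, rfl⟩)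
  have hq1 : ∀ x ∈ Ioi (0:ℝ), 1 ≤ conj p x := by
    intro x hx
    have h := hplt x hx
    show (1:ℝ) ≤ p x / (p x - 1)
    rw [le_div_iff₀ (by linarith)]
    linarith
  have hq0 : ∀ x ∈ Ioi (0:ℝ), 0 ≤ conj p x := fun x hx => le_trans zero_le_one (hq1 x hx)
  -- monotonicity of the truncated functions
  have hgmono : ∀ (u : ℝ → ℝ) (b b' : ℝ), b ≤ b' → ∀ x,
      ENNReal.ofReal |indicator (Ioo (0:ℝ) b) u x| ≤
        ENNReal.ofReal |indicator (Ioo (0:ℝ) b') u x| := by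
    intro u b b' hbb' x
    by_cases hx : x ∈ Ioo (0:ℝ) b
    · have hx' : x ∈ Ioo (0:ℝ) b' := ⟨hx.1, lt_of_lt_of_le hx.2 hbb'⟩
      rw [indicator_of_mem hx, indicator_of_mem hx']
    · rw [indicator_of_notMem hx]
      simp
  -- Step A : positivity of the norm of w on (0, 1/2)
  have hwae : ∀ᵐ x : ℝ, x ∈ Ioi (0:ℝ) → 0 < w x :=
    (ae_restrict_iff' measurableSet_Ioi).mp hwpos
  have hnull : volume {x : ℝ | x ∈ Ioi (0:ℝ) ∧ ¬ (0 < w x)} = 0 := by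
    rw [ae_iff] at hwae
    refine measure_mono_null ?_ hwae
    rintro x ⟨hx1, hx2⟩ hx3
    exact hx2 (hx3 hx1)
  have hEex : ∃ n : ℕ, volume (Ioo (0:ℝ) (1/2) ∩ {x | 1/((n:ℝ)+1) < w x}) ≠ 0 := by
    by_contra hcon
    push_neg at hcon
    have hsub : Ioo (0:ℝ) (1/2) ∩ {x | 0 < w x} ⊆
        ⋃ n : ℕ, (Ioo (0:ℝ) (1/2) ∩ {x | 1/((n:ℝ)+1) < w x}) := by
      rintro x ⟨hx1, hx2⟩
      obtain ⟨n, hn⟩ := exists_nat_one_div_lt (show (0:ℝ) < w x from hx2)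
      exact mem_iUnion.mpr ⟨n, hx1, hn⟩
    have h1 : volume (Ioo (0:ℝ) (1/2) ∩ {x | 0 < w x}) = 0 :=
      measure_mono_null hsub (by rw [measure_iUnion_null_iff]; intro n; exact hcon n)
    have h2 : Ioo (0:ℝ) (1/2) \ {x | 0 < w x} ⊆ {x : ℝ | x ∈ Ioi (0:ℝ) ∧ ¬ (0 < w x)} := by
      rintro x ⟨hx1, hx2⟩
      exact ⟨hx1.1, hx2⟩
    have h3 := measure_inter_add_diff (μ := volume) (t := {x : ℝ | 0 < w x}) (Ioo (0:ℝ) (1/2))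
      (measurableSet_lt (f := fun _ => (0:ℝ)) measurable_const wmeas)
    rw [h1, measure_mono_null h2 hnull, Real.volume_Ioo] at h3
    simp only [zero_add, sub_zero] at h3
    have h4 := h3.symm
    rw [ENNReal.ofReal_eq_zero] at h4
    norm_num at h4
  obtain ⟨n, hn⟩ := hEex
  have hδ : 0 < 1/((n:ℝ)+1) := by positivity
  set δ : ℝ := 1/((n:ℝ)+1) with hδdef
  set E : Set ℝ := Ioo (0:ℝ) (1/2) ∩ {x | δ < w x} with hEdef
  have hEmeas : MeasurableSet E := measurableSet_Ioo.inter (measurableSet_lt (f := fun _ => δ) measurable_const wmeas)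
  have hEsub : E ⊆ Ioi (0:ℝ) := fun x hx => hx.1.1
  set m : ℝ≥0∞ := volume E with hmdef
  have hm0 : m ≠ 0 := hn
  have hmle : m ≤ 1 := by
    calc m ≤ volume (Ioo (0:ℝ) (1/2)) := measure_mono inter_subset_left
    _ = ENNReal.ofReal (1/2 - 0) := Real.volume_Ioo
    _ ≤ 1 := by rw [ENNReal.ofReal_le_one]; norm_num
  have hmtop : m ≠ ∞ := (lt_of_le_of_lt hmle one_lt_top).ne
  have hδ0' : ENNReal.ofReal δ ≠ 0 := (ENNReal.ofReal_pos.mpr hδ).ne'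
  set μ₀ : ℝ≥0∞ := ENNReal.ofReal δ * m / 2 with hμ₀def
  have hμ₀pos : 0 < μ₀ := ENNReal.div_pos (mul_ne_zero hδ0' hm0) ENNReal.ofNat_ne_top
  have hδm_top : ENNReal.ofReal δ * m ≠ ∞ := ENNReal.mul_ne_top ENNReal.ofReal_ne_top hmtop
  have hμ₀lt : μ₀ < ENNReal.ofReal δ * m := ENNReal.half_lt_self (mul_ne_zero hδ0' hm0) hδm_top
  have hμ₀top : μ₀ ≠ ∞ := (lt_trans hμ₀lt (lt_top_iff_ne_top.mpr hδm_top)).ne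
  -- the norm of w over (0,1/2) is bounded below by μ₀
  have hLc : μ₀ ≤ lux p (indicator (Ioo (0:ℝ) (1/2)) w) := by
    refine le_sInf ?_
    rintro ν ⟨hν0, hν1⟩
    by_contra hcon
    push_neg at hcon
    have hνtop : ν ≠ ∞ := (lt_trans hcon (lt_top_iff_ne_top.mpr hμ₀top)).ne
    have hμ₀le : μ₀ ≤ ENNReal.ofReal δ := by
      refine le_trans hμ₀lt.le ?_
      calc ENNReal.ofReal δ * m ≤ ENNReal.ofReal δ * 1 := mul_le_mul_right hmle _
      _ = ENNReal.ofReal δ := mul_one _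
    have hνδ : ν ≤ ENNReal.ofReal δ := hcon.le.trans hμ₀le
    have h1 : ∫⁻ _ in E, ENNReal.ofReal δ / ν ≤
        ∫⁻ x in E, (ENNReal.ofReal |indicator (Ioo (0:ℝ) (1/2)) w x| / ν) ^ (p x) := by
      refine lintegral_mono_ae ?_
      filter_upwards [ae_restrict_mem hEmeas] with x hx
      have hx0 : x ∈ Ioi (0:ℝ) := hEsub hx
      have hwx : ENNReal.ofReal δ ≤ ENNReal.ofReal |indicator (Ioo (0:ℝ) (1/2)) w x| := by
        rw [indicator_of_mem hx.1]
        exact ENNReal.ofReal_le_ofReal ((le_abs_self _).trans' hx.2.le)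
      have hdiv : ENNReal.ofReal δ / ν ≤
          ENNReal.ofReal |indicator (Ioo (0:ℝ) (1/2)) w x| / ν :=
        ENNReal.div_le_div hwx le_rfl
      have hbase : (1:ℝ≥0∞) ≤ ENNReal.ofReal |indicator (Ioo (0:ℝ) (1/2)) w x| / ν := by
        rw [ENNReal.le_div_iff_mul_le (Or.inl hν0.ne') (Or.inl hνtop), one_mul]
        exact hνδ.trans hwx
      calc ENNReal.ofReal δ / ν ≤ ENNReal.ofReal |indicator (Ioo (0:ℝ) (1/2)) w x| / ν := hdiv
      _ = (ENNReal.ofReal |indicator (Ioo (0:ℝ) (1/2)) w x| / ν) ^ (1:ℝ) :=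
        (ENNReal.rpow_one _).symm
      _ ≤ (ENNReal.ofReal |indicator (Ioo (0:ℝ) (1/2)) w x| / ν) ^ (p x) :=
        ENNReal.rpow_le_rpow_of_exponent_le hbase (hp1 x hx0)
    have h2 : ∫⁻ x in E, (ENNReal.ofReal |indicator (Ioo (0:ℝ) (1/2)) w x| / ν) ^ (p x) ≤ 1 :=
      le_trans (lintegral_mono_set hEsub) hν1
    have h3 : ENNReal.ofReal δ / ν * m ≤ 1 := by
      calc ENNReal.ofReal δ / ν * m = ∫⁻ _ in E, ENNReal.ofReal δ / ν :=
        (setLIntegral_const E _).symm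
      _ ≤ 1 := h1.trans h2
    have h4 : ENNReal.ofReal δ * m ≤ ν := by
      rw [div_eq_mul_inv, mul_right_comm, ← div_eq_mul_inv] at h3
      have := (ENNReal.div_le_iff_le_mul (Or.inl hν0.ne') (Or.inl hνtop)).mp h3
      rwa [one_mul] at this
    exact absurd (h4.trans hcon.le) (not_le.mpr hμ₀lt)
  have hLcpos : (0:ℝ≥0∞) < lux p (indicator (Ioo (0:ℝ) (1/2)) w) := lt_of_lt_of_le hμ₀pos hLc
  -- Step B : finiteness of the norm of w⁻¹ over (0,1/2)
  have hAc := hAb (1/2) (by norm_num)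
  set M : ℝ≥0∞ := lux (conj p) (indicator (Ioo (0:ℝ) (1/2)) (fun y => (w y)⁻¹)) with hMdef
  have hMtop : M ≠ ∞ := by
    intro htop
    rw [htop, ENNReal.mul_top hLcpos.ne'] at hAc
    exact absurd (top_le_iff.mp hAc) ENNReal.ofReal_ne_top
  set μM : ℝ≥0∞ := M + 1 with hμMdef
  have hμM0 : μM ≠ 0 := by simp [hμMdef]
  have hμMtop : μM ≠ ∞ := by simp [hμMdef, ENNReal.add_eq_top, hMtop]
  have hMlt : M < μM := ENNReal.lt_add_right hMtop one_ne_zero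
  have hmodM : ∫⁻ x in Ioi (0:ℝ),
      (ENNReal.ofReal |indicator (Ioo (0:ℝ) (1/2)) (fun y => (w y)⁻¹) x| / μM) ^ (conj p x) ≤ 1 :=
    modular_le_of_eLux_lt hq0 hMlt
  have hmodMb : ∀ b : ℝ, b ≤ 1/2 →
      ∫⁻ x in Ioi (0:ℝ),
        (ENNReal.ofReal |indicator (Ioo (0:ℝ) b) (fun y => (w y)⁻¹) x| / μM) ^ (conj p x) ≤ 1 :=
    fun b hb => le_trans (modular_mono hq0 (hgmono _ b (1/2) hb) μM) hmodM
  -- Step C : lower bound for the norm of w over (0,b), b ≤ 1/2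
  have hLlow : ∀ b : ℝ, 0 < b → b ≤ 1/2 →
      ENNReal.ofReal b / (2 * μM) ≤ lux p (indicator (Ioo (0:ℝ) b) w) := by
    intro b hb hbc
    refine le_sInf ?_
    rintro ν ⟨hν0, hν1⟩
    rcases eq_or_ne ν ∞ with hνtop | hνtop
    · exact hνtop ▸ le_top
    have key : (ν * μM)⁻¹ * ENNReal.ofReal b ≤ 2 := by
      have hwae' : ∀ᵐ x ∂(volume.restrict (Ioo (0:ℝ) b)), 0 < w x :=
        ae_restrict_of_ae_restrict_of_subset (fun x (hx : x ∈ Ioo (0:ℝ) b) => hx.1) hwpos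
      have hptw : ∀ᵐ x ∂(volume.restrict (Ioo (0:ℝ) b)),
          (ν * μM)⁻¹ ≤ (ENNReal.ofReal |indicator (Ioo (0:ℝ) b) w x| / ν) ^ (p x) +
            (ENNReal.ofReal |indicator (Ioo (0:ℝ) b) (fun y => (w y)⁻¹) x| / μM) ^ (conj p x) := by
        filter_upwards [ae_restrict_mem measurableSet_Ioo, hwae'] with x hx hwx
        have hx0 : x ∈ Ioi (0:ℝ) := hx.1
        have hconj : (p x).HolderConjugate (conj p x) :=
          Real.HolderConjugate.conjExponent (hplt x hx0)
        have hgbx : ENNReal.ofReal |indicator (Ioo (0:ℝ) b) w x| = ENNReal.ofReal (w x) := by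
          rw [indicator_of_mem hx, abs_of_pos hwx]
        have hhbx : ENNReal.ofReal |indicator (Ioo (0:ℝ) b) (fun y => (w y)⁻¹) x| =
            ENNReal.ofReal (w x)⁻¹ := by
          rw [indicator_of_mem hx, abs_of_pos (inv_pos.mpr hwx)]
        have heq : (ENNReal.ofReal |indicator (Ioo (0:ℝ) b) w x| / ν) *
            (ENNReal.ofReal |indicator (Ioo (0:ℝ) b) (fun y => (w y)⁻¹) x| / μM) =
            (ν * μM)⁻¹ := by
          rw [hgbx, hhbx, div_eq_mul_inv, div_eq_mul_inv, mul_mul_mul_comm,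
            ← ENNReal.ofReal_mul hwx.le, mul_inv_cancel₀ hwx.ne', ENNReal.ofReal_one, one_mul,
            ENNReal.mul_inv (Or.inl hν0.ne') (Or.inl hνtop)]
        calc (ν * μM)⁻¹ = (ENNReal.ofReal |indicator (Ioo (0:ℝ) b) w x| / ν) *
            (ENNReal.ofReal |indicator (Ioo (0:ℝ) b) (fun y => (w y)⁻¹) x| / μM) := heq.symm
        _ ≤ (ENNReal.ofReal |indicator (Ioo (0:ℝ) b) w x| / ν) ^ (p x) / ENNReal.ofReal (p x) +
            (ENNReal.ofReal |indicator (Ioo (0:ℝ) b) (fun y => (w y)⁻¹) x| / μM) ^ (conj p x) /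
              ENNReal.ofReal (conj p x) := ENNReal.young_inequality _ _ hconj
        _ ≤ (ENNReal.ofReal |indicator (Ioo (0:ℝ) b) w x| / ν) ^ (p x) +
            (ENNReal.ofReal |indicator (Ioo (0:ℝ) b) (fun y => (w y)⁻¹) x| / μM) ^ (conj p x) := by
          refine add_le_add ?_ ?_
          · calc _ ≤ _ / (1:ℝ≥0∞) :=
              ENNReal.div_le_div le_rfl (ENNReal.one_le_ofReal.mpr (hp1 x hx0))
            _ = _ := div_one _
          · calc _ ≤ _ / (1:ℝ≥0∞) :=
              ENNReal.div_le_div le_rfl (ENNReal.one_le_ofReal.mpr (hq1 x hx0))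
            _ = _ := div_one _
      have hmeas1 : Measurable fun x : ℝ =>
          (ENNReal.ofReal |indicator (Ioo (0:ℝ) b) w x| / ν) ^ (p x) :=
        ((((wmeas.indicator measurableSet_Ioo).abs).ennreal_ofReal).div_const ν).pow hpmeas
      have hint := lintegral_mono_ae hptw
      rw [setLIntegral_const, Real.volume_Ioo, sub_zero, lintegral_add_left hmeas1] at hint
      have hi1 : ∫⁻ x in Ioo (0:ℝ) b,
          (ENNReal.ofReal |indicator (Ioo (0:ℝ) b) w x| / ν) ^ (p x) ≤ 1 :=
        le_trans (lintegral_mono_set Ioo_subset_Ioi_self) hν1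
      have hi2 : ∫⁻ x in Ioo (0:ℝ) b,
          (ENNReal.ofReal |indicator (Ioo (0:ℝ) b) (fun y => (w y)⁻¹) x| / μM) ^ (conj p x) ≤ 1 :=
        le_trans (lintegral_mono_set Ioo_subset_Ioi_self) (hmodMb b hbc)
      calc (ν * μM)⁻¹ * ENNReal.ofReal b ≤ _ := hint
      _ ≤ 1 + 1 := add_le_add hi1 hi2
      _ = 2 := one_add_one_eq_two
    have hfin : ENNReal.ofReal b ≤ ν * (2 * μM) := by
      have h1 : ENNReal.ofReal b = (ν * μM) * ((ν * μM)⁻¹ * ENNReal.ofReal b) := by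
        rw [← mul_assoc, ENNReal.mul_inv_cancel (mul_ne_zero hν0.ne' hμM0)
          (ENNReal.mul_ne_top hνtop hμMtop), one_mul]
      rw [h1]
      calc (ν * μM) * ((ν * μM)⁻¹ * ENNReal.ofReal b) ≤ (ν * μM) * 2 := mul_le_mul_right key _
      _ = ν * (2 * μM) := by ring
    exact (ENNReal.div_le_iff_le_mul (Or.inl (mul_ne_zero two_ne_zero hμM0))
      (Or.inl (ENNReal.mul_ne_top ENNReal.ofNat_ne_top hμMtop))).mpr hfin
  -- conversion to real constants
  set Kr : ℝ := (2 * μM).toReal with hKrdef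
  have hKrpos : 0 < Kr :=
    ENNReal.toReal_pos (mul_ne_zero two_ne_zero hμM0) (ENNReal.mul_ne_top ENNReal.ofNat_ne_top hμMtop)
  have hofKr : ENNReal.ofReal Kr = 2 * μM :=
    ENNReal.ofReal_toReal (ENNReal.mul_ne_top ENNReal.ofNat_ne_top hμMtop)
  have hLlow' : ∀ b : ℝ, 0 < b → b ≤ 1/2 →
      ENNReal.ofReal (b / Kr) ≤ lux p (indicator (Ioo (0:ℝ) b) w) := by
    intro b hb hbc
    rw [ENNReal.ofReal_div_of_pos hKrpos, hofKr]
    exact hLlow b hb hbc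
  -- the constant
  set D : ℝ := pPlus p - 1 with hDdef
  have hD0 : 0 ≤ D := by
    have h1 : (1:ℝ) ≤ p 1 := hp1 1 (by norm_num)
    have h2 : p 1 ≤ pPlus p := le_csSup hpbdd ⟨1, by norm_num, rfl⟩
    rw [hDdef]; linarith
  have hr₁pos : 0 < (1/2) / Kr := by positivity
  set B : ℝ := max (D * |Real.log ((1/2) / Kr)|)
      (2 * CL / Real.log 2 * |Real.log Kr| + 2 * CL) with hBdef
  refine ⟨Real.exp B, Real.exp_pos B, ?_⟩
  intro b hb
  have hne : (p '' Ioo (0:ℝ) b).Nonempty := ⟨p (b/2), ⟨b/2, ⟨by linarith, by linarith⟩, rfl⟩⟩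
  have hsub : Ioo (0:ℝ) b ⊆ Ioi (0:ℝ) := fun x hx => hx.1
  have hbddA : BddAbove (p '' Ioo (0:ℝ) b) := hpbdd.mono (image_mono (f := p) hsub)
  have hbddB : BddBelow (p '' Ioo (0:ℝ) b) :=
    ⟨1, by rintro y ⟨x, hx, rfl⟩; exact hp1 x (hsub hx)⟩
  set e : ℝ := pPlusOn p (Ioo (0:ℝ) b) - pMinusOn p (Ioo (0:ℝ) b) with hedef
  have he0 : 0 ≤ e := by
    rw [hedef, sub_nonneg]
    exact csInf_le_csSup hne hbddB hbddA
  have hgoal : pMinusOn p (Ioo (0:ℝ) b) - pPlusOn p (Ioo (0:ℝ) b) = -e := by rw [hedef]; ring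
  rw [hgoal]
  by_cases hbc : b < 1/2
  · -- small b : use log-Hölder continuity
    have hΛpos : 0 < -Real.log b := by
      have : Real.log b < 0 := Real.log_neg hb (by linarith)
      linarith
    have hΛ2 : Real.log 2 ≤ -Real.log b := by
      have h1 : Real.log b < Real.log (1/2) := Real.log_lt_log hb hbc
      rw [show (1:ℝ)/2 = 2⁻¹ by norm_num, Real.log_inv] at h1
      linarith
    have hbound : ∀ x ∈ Ioo (0:ℝ) b, |p x - p₀| ≤ CL / (-Real.log b) := by
      intro x hx
      have hxc : x ∈ Ioo (0:ℝ) (1/2) := ⟨hx.1, by linarith [hx.2]⟩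
      refine (hLH x hxc).trans ?_
      have hlog : -Real.log b ≤ -Real.log x := by
        have := Real.log_lt_log hx.1 hx.2
        linarith
      gcongr
    have hplus : pPlusOn p (Ioo (0:ℝ) b) ≤ p₀ + CL / (-Real.log b) := by
      refine csSup_le hne ?_
      rintro y ⟨x, hx, rfl⟩
      have := abs_le.mp (hbound x hx)
      linarith [this.2]
    have hminus : p₀ - CL / (-Real.log b) ≤ pMinusOn p (Ioo (0:ℝ) b) := by
      refine le_csInf hne ?_
      rintro y ⟨x, hx, rfl⟩
      have := abs_le.mp (hbound x hx)
      linarith [this.1]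
    have heb : e ≤ 2 * (CL / (-Real.log b)) := by
      rw [hedef]
      have h1 : pPlusOn p (Ioo (0:ℝ) b) = sSup (p '' Ioo (0:ℝ) b) := rfl
      linarith
    have hlogdiv : -Real.log (b / Kr) = -Real.log b + Real.log Kr := by
      rw [Real.log_div hb.ne' hKrpos.ne']; ring
    have hprod : e * (-Real.log (b / Kr)) ≤ 2 * CL / Real.log 2 * |Real.log Kr| + 2 * CL := by
      rw [hlogdiv]
      have h1 : e * (-Real.log b + Real.log Kr) ≤ e * (-Real.log b + |Real.log Kr|) :=
        mul_le_mul_of_nonneg_left (by linarith [le_abs_self (Real.log Kr)]) he0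
      have h2 : e * (-Real.log b + |Real.log Kr|) ≤
          (2 * (CL / (-Real.log b))) * (-Real.log b + |Real.log Kr|) :=
        mul_le_mul_of_nonneg_right heb (by positivity)
      have h3 : (2 * (CL / (-Real.log b))) * (-Real.log b + |Real.log Kr|)
          = 2 * CL + 2 * CL / (-Real.log b) * |Real.log Kr| := by
        have hΛne : -Real.log b ≠ 0 := ne_of_gt hΛpos
        rw [mul_add, mul_assoc 2, div_mul_cancel₀ CL hΛne, ← mul_div_assoc]
      have h4 : 2 * CL / (-Real.log b) * |Real.log Kr| ≤
          2 * CL / Real.log 2 * |Real.log Kr| := by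
        have hlog2 : (0:ℝ) < Real.log 2 := Real.log_pos (by norm_num)
        exact mul_le_mul_of_nonneg_right
          (div_le_div_of_nonneg_left (by linarith) hlog2 hΛ2) (abs_nonneg _)
      calc e * (-Real.log b + Real.log Kr)
          ≤ e * (-Real.log b + |Real.log Kr|) := h1
        _ ≤ (2 * (CL / (-Real.log b))) * (-Real.log b + |Real.log Kr|) := h2
        _ = 2 * CL + 2 * CL / (-Real.log b) * |Real.log Kr| := h3
        _ ≤ 2 * CL + 2 * CL / Real.log 2 * |Real.log Kr| := by linarith [h4]
        _ = 2 * CL / Real.log 2 * |Real.log Kr| + 2 * CL := by ring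
    exact key_bound (by positivity) he0 (hLlow' b hb hbc.le)
      (hprod.trans (le_max_right _ _))
  · -- large b : use global bounds
    push_neg at hbc
    have heD : e ≤ D := by
      have h1 : pPlusOn p (Ioo (0:ℝ) b) ≤ pPlus p :=
        csSup_le_csSup hpbdd hne (image_mono (f := p) hsub)
      have h2 : (1:ℝ) ≤ pMinusOn p (Ioo (0:ℝ) b) :=
        le_csInf hne (by rintro y ⟨x, hx, rfl⟩; exact hp1 x (hsub hx))
      rw [hedef, hDdef]
      have h3 : pPlusOn p (Ioo (0:ℝ) b) = sSup (p '' Ioo (0:ℝ) b) := rfl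
      linarith
    have hx : ENNReal.ofReal ((1/2) / Kr) ≤ lux p (indicator (Ioo (0:ℝ) b) w) :=
      le_trans (hLlow' (1/2) (by norm_num) le_rfl) (eLux_mono' hp0 (hgmono w (1/2) b hbc))
    have hprod : e * (-Real.log ((1/2) / Kr)) ≤ D * |Real.log ((1/2) / Kr)| := by
      calc e * (-Real.log ((1/2) / Kr)) ≤ e * |Real.log ((1/2) / Kr)| :=
        mul_le_mul_of_nonneg_left (neg_le_abs _) he0
      _ ≤ D * |Real.log ((1/2) / Kr)| := mul_le_mul_of_nonneg_right heD (abs_nonneg _)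
    exact key_bound hr₁pos he0 hx (hprod.trans (le_max_left _ _))


end
end

section
/- If a weight w on (0,∞) belongs to A_{∞,0}, then w is not integrable over (0,∞), i.e., ∫₀^∞ w(x)dx = ∞. -/
open MeasureTheory Set ENNReal Real

noncomputable section

/-- the class `A_{∞,0}` on `(0,∞)`. -/
def Ainfty0 (w : ℝ → ℝ) : Prop :=
  (∀ b > (0:ℝ), 0 < (∫⁻ x in Ioo (0:ℝ) b, ENNReal.ofReal (w x)) ∧
      (∫⁻ x in Ioo (0:ℝ) b, ENNReal.ofReal (w x)) < ∞) ∧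
  ∃ C > (0:ℝ), ∃ δ > (0:ℝ), ∀ b > (0:ℝ), ∀ E ⊆ Ioo (0:ℝ) b, MeasurableSet E →
    volume E / ENNReal.ofReal b ≤
      ENNReal.ofReal C *
        ((∫⁻ x in E, ENNReal.ofReal (w x)) /
          ∫⁻ x in Ioo (0:ℝ) b, ENNReal.ofReal (w x)) ^ δ

theorem statement10 (w : ℝ → ℝ) (hw : IsWeight w) (hA : Ainfty0 w) :
    (∫⁻ x in Ioi (0:ℝ), ENNReal.ofReal (w x)) = ∞ := by
  by_contra hS
  have hmeas : Measurable fun x => ENNReal.ofReal (w x) := hw.1.ennreal_ofReal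
  obtain ⟨hfin, C, hC, δ, hδ, key⟩ := hA
  set μ := volume.withDensity (fun x => ENNReal.ofReal (w x)) with hμdef
  have happly : ∀ s : Set ℝ, MeasurableSet s →
      μ s = ∫⁻ x in s, ENNReal.ofReal (w x) := fun s hs => withDensity_apply _ hs
  have hm0 : 0 < μ (Ioo (0:ℝ) 1) := by rw [happly _ measurableSet_Ioo]; exact (hfin 1 one_pos).1
  have hmtop : μ (Ioo (0:ℝ) 1) ≠ ∞ := by
    rw [happly _ measurableSet_Ioo]; exact (hfin 1 one_pos).2.ne
  have hStop : μ (Ioi (0:ℝ)) ≠ ∞ := by rw [happly _ measurableSet_Ioi]; exact hS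
  have hS0 : 0 < μ (Ioi (0:ℝ)) :=
    lt_of_lt_of_le hm0 (measure_mono (fun x hx => hx.1))
  -- choose t with C * t^δ = 1/4
  set t : ℝ≥0∞ := (ENNReal.ofReal (1/(4*C))) ^ (1/δ) with htdef
  have hx0 : (0:ℝ≥0∞) < ENNReal.ofReal (1/(4*C)) := ENNReal.ofReal_pos.2 (by positivity)
  have ht0 : 0 < t := ENNReal.rpow_pos hx0 ENNReal.ofReal_ne_top
  have httop : t ≠ ∞ := ENNReal.rpow_ne_top_of_nonneg (by positivity) ENNReal.ofReal_ne_top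
  have htδ : t ^ δ = ENNReal.ofReal (1/(4*C)) := by
    rw [htdef, ← ENNReal.rpow_mul, one_div_mul_cancel hδ.ne', ENNReal.rpow_one]
  set ε : ℝ≥0∞ := μ (Ioo (0:ℝ) 1) * t with hεdef
  have hε0 : 0 < ε := ENNReal.mul_pos hm0.ne' ht0.ne'
  have hεtop : ε ≠ ∞ := ENNReal.mul_ne_top hmtop httop
  -- monotone union
  have hunion : (⋃ n : ℕ, Ioo (0:ℝ) (n:ℝ)) = Ioi (0:ℝ) := by
    ext x
    simp only [mem_iUnion, mem_Ioo, mem_Ioi]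
    constructor
    · rintro ⟨n, h1, _⟩; exact h1
    · intro hx
      obtain ⟨n, hn⟩ := exists_nat_gt x
      exact ⟨n, hx, hn⟩
  have hmono : Monotone fun n : ℕ => Ioo (0:ℝ) (n:ℝ) :=
    fun n m hnm => Ioo_subset_Ioo le_rfl (Nat.cast_le.2 hnm)
  have hsup : μ (Ioi (0:ℝ)) = ⨆ n : ℕ, μ (Ioo (0:ℝ) (n:ℝ)) := by
    rw [← hunion]
    exact hmono.directed_le.measure_iUnion
  have hlt : μ (Ioi (0:ℝ)) - ε < ⨆ n : ℕ, μ (Ioo (0:ℝ) (n:ℝ)) := by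
    rw [← hsup]; exact ENNReal.sub_lt_self hStop hS0.ne' hε0.ne'
  obtain ⟨n, hn⟩ := lt_iSup_iff.1 hlt
  have hncast : (0:ℝ) ≤ (n:ℝ) := Nat.cast_nonneg n
  set a : ℝ := (n:ℝ) + 1 with hadef
  have ha1 : (1:ℝ) ≤ a := by rw [hadef]; linarith
  have ha0 : (0:ℝ) < a := by linarith
  have hlt' : μ (Ioi (0:ℝ)) - ε < μ (Ioo (0:ℝ) a) :=
    lt_of_lt_of_le hn (measure_mono (Ioo_subset_Ioo le_rfl (by rw [hadef]; linarith)))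
  -- tail bound
  have hdecomp : μ (Ioo (0:ℝ) a) + μ (Ici a) = μ (Ioi (0:ℝ)) := by
    rw [← measure_union ((Iio_disjoint_Ici le_rfl).mono_left Ioo_subset_Iio_self)
      measurableSet_Ici, Ioo_union_Ici_eq_Ioi ha0]
  have htail : μ (Ici a) ≤ ε := by
    by_contra h
    push_neg at h
    have h2 : μ (Ioo (0:ℝ) a) + ε ≤ μ (Ioi (0:ℝ)) := by
      rw [← hdecomp]; exact add_le_add le_rfl h.le
    exact absurd (ENNReal.le_sub_of_add_le_right hεtop h2) (not_le.2 hlt')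
  -- apply the A∞ condition with b = 2a, E = Ioo a (2a)
  have hb0 : (0:ℝ) < 2 * a := by linarith
  have hkey := key (2 * a) hb0 (Ioo a (2 * a))
    (Ioo_subset_Ioo ha0.le le_rfl) measurableSet_Ioo
  -- LHS = ofReal (1/2)
  have hLHS : volume (Ioo a (2 * a)) / ENNReal.ofReal (2 * a) = ENNReal.ofReal (1/2) := by
    rw [Real.volume_Ioo, ← ENNReal.ofReal_div_of_pos hb0]
    congr 1
    field_simp
    ring
  -- numerator bound
  have hnum : (∫⁻ x in Ioo a (2 * a), ENNReal.ofReal (w x)) ≤ ε := by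
    rw [← happly _ measurableSet_Ioo]
    exact le_trans (measure_mono (fun x hx => hx.1.le)) htail
  -- denominator bound
  have hden : μ (Ioo (0:ℝ) 1) ≤ ∫⁻ x in Ioo (0:ℝ) (2 * a), ENNReal.ofReal (w x) := by
    rw [← happly _ measurableSet_Ioo]
    exact measure_mono (Ioo_subset_Ioo le_rfl (by linarith))
  have hratio : (∫⁻ x in Ioo a (2 * a), ENNReal.ofReal (w x)) /
      (∫⁻ x in Ioo (0:ℝ) (2 * a), ENNReal.ofReal (w x)) ≤ t := by
    calc _ ≤ ε / μ (Ioo (0:ℝ) 1) := ENNReal.div_le_div hnum hden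
      _ = t := by rw [hεdef, mul_comm, mul_div_assoc, ENNReal.div_self hm0.ne' hmtop, mul_one]
  have hfinal : ENNReal.ofReal (1/2) ≤ ENNReal.ofReal (1/4) := by
    calc ENNReal.ofReal (1/2) ≤ ENNReal.ofReal C *
          ((∫⁻ x in Ioo a (2 * a), ENNReal.ofReal (w x)) /
            ∫⁻ x in Ioo (0:ℝ) (2 * a), ENNReal.ofReal (w x)) ^ δ := hLHS ▸ hkey
      _ ≤ ENNReal.ofReal C * t ^ δ :=
          mul_le_mul_right (ENNReal.rpow_le_rpow hratio hδ.le) _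
      _ = ENNReal.ofReal (1/4) := by
          rw [htδ, ← ENNReal.ofReal_mul hC.le]
          congr 1
          field_simp
  rw [ENNReal.ofReal_le_ofReal_iff (by norm_num)] at hfinal
  linarith


end
end

section
/- Let p(·) ∈ P(0,∞) with p(·) ∈ LH₀(0,∞) ∩ LH_∞(0,∞) and 1 < p⁻ ≤ p⁺ < ∞, and let w ∈ A_{p(·),0}. Then there exist constants c₁,c₂>0 such that for every b>0 with ‖wχ_{(0,b)}‖_{p(·)} ≥ 1, one has c₁ W(0,b)^{1/p_∞} ≤ ‖wχ_{(0,b)}‖_{p(·)} ≤ c₂ W(0,b)^{1/p_∞}, where W(0,b)=∫₀^b w(x)^{p(x)}dx and p_∞ = lim_{x→∞} p(x). -/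
open MeasureTheory Set ENNReal Real

noncomputable section

namespace Aux12

/-- the modular of `w·χ_{(0,b)}/m`. -/
def Md (p w : ℝ → ℝ) (m b : ℝ) : ℝ≥0∞ :=
  ∫⁻ x in Ioo (0:ℝ) b, ENNReal.ofReal ((w x / m) ^ p x)

/-- the weighted quantity `W(0,b)`. -/
def Wf (p w : ℝ → ℝ) (b : ℝ) : ℝ≥0∞ :=
  ∫⁻ x in Ioo (0:ℝ) b, ENNReal.ofReal (w x ^ p x)

lemma luxS (q : ℝ → ℝ) (f : ℝ → ℝ) :
    lux q f = sInf {μ : ℝ≥0∞ | 0 < μ ∧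
      ∫⁻ x in Ioi (0:ℝ), (ENNReal.ofReal |f x| / μ) ^ q x ≤ 1} := rfl

lemma ind_int (f : ℝ → ℝ≥0∞) (b : ℝ) :
    ∫⁻ x in Ioi (0:ℝ), (Ioo (0:ℝ) b).indicator f x = ∫⁻ x in Ioo (0:ℝ) b, f x := by
  rw [lintegral_indicator measurableSet_Ioo, Measure.restrict_restrict measurableSet_Ioo,
    inter_eq_self_of_subset_left (fun x hx => hx.1)]

variable {p w : ℝ → ℝ}

lemma mod_eq (hp1 : ∀ x ∈ Ioi (0:ℝ), 1 ≤ p x) (hw0 : ∀ x ∈ Ioi (0:ℝ), 0 ≤ w x)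
    {m : ℝ} (hm : 0 < m) (b : ℝ) :
    (∫⁻ x in Ioi (0:ℝ),
        (ENNReal.ofReal |(Ioo (0:ℝ) b).indicator w x| / ENNReal.ofReal m) ^ p x)
      = Md p w m b := by
  rw [Md, ← ind_int (fun x => ENNReal.ofReal ((w x / m) ^ p x)) b]
  refine setLIntegral_congr_fun measurableSet_Ioi ?_
  intro x hx
  dsimp only
  have hpx : 0 < p x := lt_of_lt_of_le one_pos (hp1 x hx)
  by_cases hxb : x ∈ Ioo (0:ℝ) b
  · rw [indicator_of_mem hxb, indicator_of_mem hxb, abs_of_nonneg (hw0 x hx),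
      ← ENNReal.ofReal_div_of_pos hm]
    rcases eq_or_lt_of_le (div_nonneg (hw0 x hx) hm.le) with h0 | h0
    · rw [← h0, ENNReal.ofReal_zero, ENNReal.zero_rpow_of_pos hpx,
        Real.zero_rpow hpx.ne', ENNReal.ofReal_zero]
    · exact ENNReal.ofReal_rpow_of_pos h0
  · rw [indicator_of_notMem hxb, indicator_of_notMem hxb, abs_zero, ENNReal.ofReal_zero,
      ENNReal.zero_div, ENNReal.zero_rpow_of_pos hpx]

lemma norm_le_of_mod (hp1 : ∀ x ∈ Ioi (0:ℝ), 1 ≤ p x) (hw0 : ∀ x ∈ Ioi (0:ℝ), 0 ≤ w x)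
    {m b : ℝ} (hm : 0 < m) (h : Md p w m b ≤ 1) :
    lux p ((Ioo (0:ℝ) b).indicator w) ≤ ENNReal.ofReal m := by
  rw [luxS]
  exact sInf_le ⟨ENNReal.ofReal_pos.mpr hm, by rw [mod_eq hp1 hw0 hm b]; exact h⟩

lemma mod_le_one (hp1 : ∀ x ∈ Ioi (0:ℝ), 1 ≤ p x) (hw0 : ∀ x ∈ Ioi (0:ℝ), 0 ≤ w x)
    {m b : ℝ} (hm : 0 < m) (h : lux p ((Ioo (0:ℝ) b).indicator w) < ENNReal.ofReal m) :
    Md p w m b ≤ 1 := by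
  rw [luxS] at h
  obtain ⟨μ, hμ, hlt⟩ := sInf_lt_iff.mp h
  rw [← mod_eq hp1 hw0 hm b]
  refine le_trans (lintegral_mono_ae ?_) hμ.2
  filter_upwards [ae_restrict_mem measurableSet_Ioi] with x hx
  exact ENNReal.rpow_le_rpow (ENNReal.div_le_div_left hlt.le _)
    (le_trans zero_le_one (hp1 x hx))

lemma wf_eq (hp1 : ∀ x ∈ Ioi (0:ℝ), 1 ≤ p x) (hw0 : ∀ x ∈ Ioi (0:ℝ), 0 ≤ w x) (b : ℝ) :
    Wf p w b = ∫⁻ x in Ioi (0:ℝ),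
      (ENNReal.ofReal |(Ioo (0:ℝ) b).indicator w x|) ^ p x := by
  have h1 : Md p w 1 b = Wf p w b := by simp [Md, Wf]
  rw [← h1, ← mod_eq hp1 hw0 one_pos b, ENNReal.ofReal_one]
  simp

lemma wf_le_max (hp1 : ∀ x ∈ Ioi (0:ℝ), 1 ≤ p x) (hw0 : ∀ x ∈ Ioi (0:ℝ), 0 ≤ w x)
    {P : ℝ} (hpP : ∀ x ∈ Ioi (0:ℝ), p x ≤ P) (hP1 : 1 ≤ P) (b : ℝ) :
    Wf p w b ≤ max 1 (lux p ((Ioo (0:ℝ) b).indicator w) ^ P) := by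
  by_cases hW : Wf p w b ≤ 1
  · exact le_max_of_le_left hW
  push_neg at hW
  have hP0 : (0:ℝ) < P := lt_of_lt_of_le one_pos hP1
  have key : ∀ μ ∈ {μ : ℝ≥0∞ | 0 < μ ∧
      ∫⁻ x in Ioi (0:ℝ), (ENNReal.ofReal |(Ioo (0:ℝ) b).indicator w x| / μ) ^ p x ≤ 1},
      Wf p w b ^ P⁻¹ ≤ μ := by
    rintro μ ⟨hμ0, hμmod⟩
    by_cases hμtop : μ = ∞
    · simp [hμtop]
    have hfin : max 1 (μ ^ P) ≠ ∞ :=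
      (max_lt ENNReal.one_lt_top (ENNReal.rpow_lt_top_of_nonneg hP0.le hμtop)).ne
    have hWle : Wf p w b ≤ max 1 (μ ^ P) := by
      rw [wf_eq hp1 hw0 b]
      calc ∫⁻ x in Ioi (0:ℝ), (ENNReal.ofReal |(Ioo (0:ℝ) b).indicator w x|) ^ p x
          ≤ ∫⁻ x in Ioi (0:ℝ),
              (ENNReal.ofReal |(Ioo (0:ℝ) b).indicator w x| / μ) ^ p x * max 1 (μ ^ P) := by
            refine lintegral_mono_ae ?_
            filter_upwards [ae_restrict_mem measurableSet_Ioi] with x hx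
            have h0 : 0 ≤ p x := le_trans zero_le_one (hp1 x hx)
            have heq : (ENNReal.ofReal |(Ioo (0:ℝ) b).indicator w x|) ^ p x
                = (ENNReal.ofReal |(Ioo (0:ℝ) b).indicator w x| / μ) ^ p x * μ ^ p x := by
              rw [← ENNReal.mul_rpow_of_nonneg _ _ h0,
                ENNReal.div_mul_cancel hμ0.ne' hμtop]
            rw [heq]
            refine mul_le_mul_right ?_ _
            rcases le_total 1 μ with h1 | h1
            · exact le_max_of_le_right (ENNReal.rpow_le_rpow_of_exponent_le h1 (hpP x hx))
            · refine le_max_of_le_left ?_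
              calc μ ^ p x ≤ 1 ^ p x := ENNReal.rpow_le_rpow h1 h0
                _ = 1 := ENNReal.one_rpow _
        _ = (∫⁻ x in Ioi (0:ℝ),
              (ENNReal.ofReal |(Ioo (0:ℝ) b).indicator w x| / μ) ^ p x) * max 1 (μ ^ P) :=
            lintegral_mul_const' _ _ hfin
        _ ≤ 1 * max 1 (μ ^ P) := mul_le_mul_left hμmod _
        _ = max 1 (μ ^ P) := one_mul _
    have hμP : Wf p w b ≤ μ ^ P := by
      rcases le_total (μ ^ P) 1 with h1 | h1
      · exact absurd (hWle.trans_eq (max_eq_left h1)) (not_le.mpr hW)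
      · rwa [max_eq_right h1] at hWle
    calc Wf p w b ^ P⁻¹ ≤ (μ ^ P) ^ P⁻¹ := ENNReal.rpow_le_rpow hμP (by positivity)
      _ = μ := by rw [← ENNReal.rpow_mul, mul_inv_cancel₀ hP0.ne', ENNReal.rpow_one]
  have hle : Wf p w b ^ P⁻¹ ≤ lux p ((Ioo (0:ℝ) b).indicator w) := by
    rw [luxS]; exact le_sInf key
  have h2 : (Wf p w b ^ P⁻¹) ^ P ≤ lux p ((Ioo (0:ℝ) b).indicator w) ^ P :=
    ENNReal.rpow_le_rpow hle hP0.le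
  rw [← ENNReal.rpow_mul, inv_mul_cancel₀ hP0.ne', ENNReal.rpow_one] at h2
  exact le_max_of_le_right h2

lemma md_le_mul (hw0 : ∀ x ∈ Ioi (0:ℝ), 0 ≤ w x)
    {P : ℝ} (hpP : ∀ x ∈ Ioi (0:ℝ), p x ≤ P)
    {m b : ℝ} (hm0 : 0 < m) (hm1 : m ≤ 1) :
    Md p w m b ≤ ENNReal.ofReal (m⁻¹ ^ P) * Wf p w b := by
  rw [Md, Wf, ← lintegral_const_mul' _ _ ENNReal.ofReal_ne_top]
  refine lintegral_mono_ae ?_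
  filter_upwards [ae_restrict_mem measurableSet_Ioo] with x hx
  have hxI : x ∈ Ioi (0:ℝ) := hx.1
  have hwx := hw0 x hxI
  have hminv : 1 ≤ m⁻¹ := by
    rw [← one_div, le_div_iff₀ hm0]; linarith
  rw [← ENNReal.ofReal_mul (by positivity)]
  apply ENNReal.ofReal_le_ofReal
  have heq : (w x / m) ^ p x = m⁻¹ ^ p x * w x ^ p x := by
    rw [div_eq_inv_mul, Real.mul_rpow (by positivity) hwx]
  rw [heq]
  exact mul_le_mul_of_nonneg_right
    (Real.rpow_le_rpow_of_exponent_le hminv (hpP x hxI)) (Real.rpow_nonneg hwx _)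

lemma one_le_wf (hp1 : ∀ x ∈ Ioi (0:ℝ), 1 ≤ p x) (hw0 : ∀ x ∈ Ioi (0:ℝ), 0 ≤ w x)
    {P : ℝ} (hpP : ∀ x ∈ Ioi (0:ℝ), p x ≤ P) (hP1 : 1 ≤ P) {b : ℝ}
    (h1 : 1 ≤ lux p ((Ioo (0:ℝ) b).indicator w)) : 1 ≤ Wf p w b := by
  have hP0 : (0:ℝ) < P := lt_of_lt_of_le one_pos hP1
  by_contra hW
  push_neg at hW
  have hWfin : Wf p w b ≠ ∞ := (hW.trans ENNReal.one_lt_top).ne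
  set t := (Wf p w b).toReal with ht
  have ht1 : t < 1 := by
    have := (ENNReal.toReal_lt_toReal hWfin (by simp)).mpr hW
    simpa using this
  rcases eq_or_lt_of_le (ENNReal.toReal_nonneg : (0:ℝ) ≤ t) with h0 | h0
  · have hWf0 : Wf p w b = 0 := by
      rcases (ENNReal.toReal_eq_zero_iff _).mp h0.symm with h | h
      · exact h
      · exact absurd h hWfin
    have hMd : Md p w (1/2) b ≤ 1 := by
      refine le_trans (md_le_mul hw0 hpP (by norm_num) (by norm_num)) ?_
      rw [hWf0, mul_zero]
      exact zero_le_one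
    have hle := norm_le_of_mod hp1 hw0 (by norm_num : (0:ℝ) < 1/2) hMd
    have h2 : (1:ℝ≥0∞) ≤ ENNReal.ofReal (1/2) := h1.trans hle
    rw [show ((1:ℝ≥0∞)) = ENNReal.ofReal 1 by simp] at h2
    have := (ENNReal.ofReal_le_ofReal_iff (by norm_num)).mp h2
    linarith
  · set m := t ^ P⁻¹ with hmdef
    have hm0 : 0 < m := Real.rpow_pos_of_pos h0 _
    have hm1 : m < 1 := Real.rpow_lt_one h0.le ht1 (by positivity)
    have hmP : m ^ P = t := by
      rw [hmdef, ← Real.rpow_mul h0.le, inv_mul_cancel₀ hP0.ne', Real.rpow_one]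
    have hmod : Md p w m b ≤ 1 := by
      refine le_trans (md_le_mul hw0 hpP hm0 hm1.le) ?_
      have hWt : Wf p w b = ENNReal.ofReal t := (ENNReal.ofReal_toReal hWfin).symm
      rw [hWt, ← ENNReal.ofReal_mul (by positivity)]
      refine ENNReal.ofReal_le_one.mpr ?_
      rw [Real.inv_rpow hm0.le, hmP, inv_mul_cancel₀ h0.ne']
    have hle := norm_le_of_mod hp1 hw0 hm0 hmod
    have h2 : (1:ℝ≥0∞) ≤ ENNReal.ofReal m := h1.trans hle
    rw [show ((1:ℝ≥0∞)) = ENNReal.ofReal 1 by simp] at h2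
    have := (ENNReal.ofReal_le_ofReal_iff (by positivity)).mp h2
    linarith

lemma lux_mono_b {q v : ℝ → ℝ} (hq0 : ∀ x ∈ Ioi (0:ℝ), 0 ≤ q x) {b b' : ℝ} (h : b ≤ b') :
    lux q ((Ioo (0:ℝ) b).indicator v) ≤ lux q ((Ioo (0:ℝ) b').indicator v) := by
  rw [luxS, luxS]
  refine sInf_le_sInf ?_
  rintro μ ⟨hμ0, hμ⟩
  refine ⟨hμ0, le_trans (lintegral_mono_ae ?_) hμ⟩
  filter_upwards [ae_restrict_mem measurableSet_Ioi] with x hx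
  have habs : |((Ioo (0:ℝ) b).indicator v) x| ≤ |((Ioo (0:ℝ) b').indicator v) x| := by
    by_cases hxb : x ∈ Ioo (0:ℝ) b
    · rw [indicator_of_mem hxb, indicator_of_mem (Ioo_subset_Ioo_right h hxb)]
    · rw [indicator_of_notMem hxb, abs_zero]
      positivity
  exact ENNReal.rpow_le_rpow
    (ENNReal.div_le_div_right (ENNReal.ofReal_le_ofReal habs) _) (hq0 x hx)

lemma lux_pos {q v : ℝ → ℝ} (hq1 : ∀ x ∈ Ioi (0:ℝ), 1 ≤ q x) (hvm : Measurable v)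
    (hv : ∀ᵐ x ∂(volume.restrict (Ioi (0:ℝ))), 0 < v x) :
    0 < lux q ((Ioo (0:ℝ) 1).indicator v) := by
  have hnull : volume ({x | ¬ 0 < v x} ∩ Ioi (0:ℝ)) = 0 := by
    have h := hv
    rw [ae_iff] at h
    rwa [Measure.restrict_apply' measurableSet_Ioi] at h
  set A : ℕ → Set ℝ := fun n => Ioo (0:ℝ) 1 ∩ {x | 1/(n+1) ≤ v x} with hA
  have hcover : Ioo (0:ℝ) 1 ⊆ ({x | ¬ 0 < v x} ∩ Ioi (0:ℝ)) ∪ ⋃ n, A n := by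
    intro x hx
    by_cases hvx : 0 < v x
    · right
      obtain ⟨n, hn⟩ := exists_nat_one_div_lt hvx
      refine mem_iUnion.mpr ⟨n, hx, ?_⟩
      simp only [mem_setOf_eq]
      exact_mod_cast hn.le
    · exact Or.inl ⟨hvx, hx.1⟩
  have hex : ∃ n, volume (A n) ≠ 0 := by
    by_contra hall
    push_neg at hall
    have h1 : volume (Ioo (0:ℝ) 1) = 0 :=
      measure_mono_null hcover (measure_union_null hnull (measure_iUnion_null hall))
    rw [Real.volume_Ioo] at h1
    simp at h1
  obtain ⟨n, hn⟩ := hex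
  set η : ℝ := 1/(n+1) with hη
  have hη0 : 0 < η := by positivity
  have hAsub : A n ⊆ Ioo (0:ℝ) 1 := inter_subset_left
  have hAmeas : MeasurableSet (A n) :=
    measurableSet_Ioo.inter (measurableSet_le measurable_const hvm)
  have hvol_le : volume (A n) ≤ 1 := by
    refine le_trans (measure_mono hAsub) ?_
    rw [Real.volume_Ioo]
    simp
  have hfin : volume (A n) ≠ ∞ := (lt_of_le_of_lt hvol_le ENNReal.one_lt_top).ne
  set ν : ℝ := (volume (A n)).toReal with hν
  have hν0 : 0 < ν := ENNReal.toReal_pos hn hfin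
  have hν1 : ν ≤ 1 := by
    have := (ENNReal.toReal_le_toReal hfin (by simp)).mpr hvol_le
    simpa using this
  set r : ℝ := η * ν / 2 with hr
  have hr0 : 0 < r := by positivity
  rw [luxS]
  refine lt_of_lt_of_le (show (0:ℝ≥0∞) < ENNReal.ofReal r from ENNReal.ofReal_pos.mpr hr0)
    (le_sInf ?_)
  rintro μ ⟨hμ0, hμmod⟩
  by_contra hlt
  push_neg at hlt
  have hbase0 : ENNReal.ofReal η / μ ≥ ENNReal.ofReal η / ENNReal.ofReal r :=
    ENNReal.div_le_div_left hlt.le _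
  have hbase1 : (1:ℝ≥0∞) ≤ ENNReal.ofReal η / μ := by
    refine le_trans ?_ hbase0
    rw [← ENNReal.ofReal_div_of_pos hr0]
    refine le_trans ?_ (ENNReal.ofReal_le_ofReal (show (2:ℝ) ≤ η / r by
      rw [hr, div_div_eq_mul_div, le_div_iff₀ (by positivity)]
      nlinarith))
    norm_num
  have hkey : ENNReal.ofReal η / μ * volume (A n) ≤ 1 := by
    refine le_trans ?_ hμmod
    calc ENNReal.ofReal η / μ * volume (A n)
        = ∫⁻ _ in A n, ENNReal.ofReal η / μ := by rw [setLIntegral_const]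
      _ ≤ ∫⁻ x in A n,
            (ENNReal.ofReal |((Ioo (0:ℝ) 1).indicator v) x| / μ) ^ q x := by
          refine lintegral_mono_ae ?_
          filter_upwards [ae_restrict_mem hAmeas] with x hx
          have hx1 : x ∈ Ioo (0:ℝ) 1 := hAsub hx
          have hxI : x ∈ Ioi (0:ℝ) := hx1.1
          have hvx : η ≤ v x := hx.2
          have hbase : ENNReal.ofReal η / μ
              ≤ ENNReal.ofReal |((Ioo (0:ℝ) 1).indicator v) x| / μ := by
            refine ENNReal.div_le_div_right (ENNReal.ofReal_le_ofReal ?_) _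
            rw [indicator_of_mem hx1]
            exact hvx.trans (le_abs_self _)
          refine hbase.trans ?_
          have h1b : (1:ℝ≥0∞) ≤ ENNReal.ofReal |((Ioo (0:ℝ) 1).indicator v) x| / μ :=
            hbase1.trans hbase
          calc ENNReal.ofReal |((Ioo (0:ℝ) 1).indicator v) x| / μ
              = (ENNReal.ofReal |((Ioo (0:ℝ) 1).indicator v) x| / μ) ^ (1:ℝ) :=
                (ENNReal.rpow_one _).symm
            _ ≤ (ENNReal.ofReal |((Ioo (0:ℝ) 1).indicator v) x| / μ) ^ q x :=
                ENNReal.rpow_le_rpow_of_exponent_le h1b (hq1 x hxI)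
      _ ≤ ∫⁻ x in Ioi (0:ℝ),
            (ENNReal.ofReal |((Ioo (0:ℝ) 1).indicator v) x| / μ) ^ q x :=
          lintegral_mono_set (hAsub.trans (fun x hx => hx.1))
  have hcontra : (2:ℝ≥0∞) ≤ 1 := by
    refine le_trans ?_ hkey
    have hAν : volume (A n) = ENNReal.ofReal ν := (ENNReal.ofReal_toReal hfin).symm
    calc (2:ℝ≥0∞) = ENNReal.ofReal 2 := by norm_num
      _ = ENNReal.ofReal (η / r * ν) := by
          congr 1
          rw [hr]
          field_simp
      _ = ENNReal.ofReal (η / r) * ENNReal.ofReal ν := ENNReal.ofReal_mul (by positivity)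
      _ = ENNReal.ofReal η / ENNReal.ofReal r * volume (A n) := by
          rw [ENNReal.ofReal_div_of_pos hr0, hAν]
      _ ≤ ENNReal.ofReal η / μ * volume (A n) := mul_le_mul_left hbase0 _
  norm_num at hcontra

lemma piece_bound (hw0 : ∀ x ∈ Ioi (0:ℝ), 0 ≤ w x)
    {b m : ℝ} (hm0 : 0 < m) {R : Set ℝ} (hR : MeasurableSet R) (hRsub : R ⊆ Ioi (0:ℝ))
    {c : ℝ} (hc0 : 0 ≤ c) (hc : ∀ x ∈ R, m ^ (-(p x)) ≤ c) :
    ∫⁻ x in R, (Ioo (0:ℝ) b).indicator (fun x => ENNReal.ofReal ((w x / m) ^ p x)) x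
      ≤ ENNReal.ofReal c *
        ∫⁻ x in R, (Ioo (0:ℝ) b).indicator (fun x => ENNReal.ofReal (w x ^ p x)) x := by
  rw [← lintegral_const_mul' _ _ ENNReal.ofReal_ne_top]
  refine lintegral_mono_ae ?_
  filter_upwards [ae_restrict_mem hR] with x hx
  by_cases hxb : x ∈ Ioo (0:ℝ) b
  · rw [indicator_of_mem hxb, indicator_of_mem hxb, ← ENNReal.ofReal_mul hc0]
    apply ENNReal.ofReal_le_ofReal
    have hwx : 0 ≤ w x := hw0 x (hRsub hx)
    calc (w x / m) ^ p x = w x ^ p x * m ^ (-(p x)) := by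
          rw [div_eq_mul_inv, Real.mul_rpow hwx (inv_nonneg.mpr hm0.le),
            Real.inv_rpow hm0.le, ← Real.rpow_neg hm0.le]
      _ ≤ w x ^ p x * c := mul_le_mul_of_nonneg_left (hc x hx) (Real.rpow_nonneg hwx _)
      _ = c * w x ^ p x := mul_comm _ _
  · simp [indicator_of_notMem hxb]

lemma piece_bound' (hw0 : ∀ x ∈ Ioi (0:ℝ), 0 ≤ w x)
    {b m : ℝ} (hm0 : 0 < m) {R : Set ℝ} (hR : MeasurableSet R) (hRsub : R ⊆ Ioi (0:ℝ))
    {c : ℝ} (hc0 : 0 ≤ c) (hc : ∀ x ∈ R, m ^ (p x) ≤ c) :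
    ∫⁻ x in R, (Ioo (0:ℝ) b).indicator (fun x => ENNReal.ofReal (w x ^ p x)) x
      ≤ ENNReal.ofReal c *
        ∫⁻ x in R, (Ioo (0:ℝ) b).indicator (fun x => ENNReal.ofReal ((w x / m) ^ p x)) x := by
  rw [← lintegral_const_mul' _ _ ENNReal.ofReal_ne_top]
  refine lintegral_mono_ae ?_
  filter_upwards [ae_restrict_mem hR] with x hx
  by_cases hxb : x ∈ Ioo (0:ℝ) b
  · rw [indicator_of_mem hxb, indicator_of_mem hxb, ← ENNReal.ofReal_mul hc0]
    apply ENNReal.ofReal_le_ofReal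
    have hwx : 0 ≤ w x := hw0 x (hRsub hx)
    calc w x ^ p x = (w x / m) ^ p x * m ^ p x := by
          rw [← Real.mul_rpow (by positivity) hm0.le, div_mul_cancel₀ _ hm0.ne']
      _ ≤ (w x / m) ^ p x * c :=
          mul_le_mul_of_nonneg_left (hc x hx) (Real.rpow_nonneg (by positivity) _)
      _ = c * (w x / m) ^ p x := mul_comm _ _
  · simp [indicator_of_notMem hxb]

lemma tail_le {b t : ℝ} (g : ℝ → ℝ≥0∞) {R : Set ℝ} (hR : R ⊆ Ioo (0:ℝ) t) :
    ∫⁻ x in R, (Ioo (0:ℝ) b).indicator g x ≤ ∫⁻ x in Ioo (0:ℝ) t, g x :=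
  le_trans (lintegral_mono fun x => indicator_le_self' (fun _ _ => zero_le) x)
    (lintegral_mono_set hR)

lemma est_one
    (hw0 : ∀ x ∈ Ioi (0:ℝ), 0 ≤ w x)
    {pinf Ci P pm A₁ : ℝ}
    (hpinf0 : 0 < pinf) (hCi : 0 < Ci)
    (hP1 : 1 ≤ P)
    (hpmle : ∀ x ∈ Ioi (0:ℝ), pm ≤ p x)
    (hΔ : ∀ x ∈ Ioi (0:ℝ), |p x - pinf| ≤ Ci / Real.log (Real.exp 1 + x))
    (hA₁1 : 1 ≤ A₁)
    (hWgrow : ∀ s : ℝ, 1 ≤ s → Wf p w s ≤ ENNReal.ofReal ((A₁ * s) ^ P))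
    {b m : ℝ} (hm : Real.exp 1 ≤ m) :
    Md p w m b ≤
      ENNReal.ofReal ((A₁ * (Real.exp (Ci / (pinf/4)) + 1)) ^ P * m ^ (-pm))
      + (ENNReal.ofReal ((2*A₁) ^ P * m ^ (-(pinf/4)))
        + ENNReal.ofReal (Real.exp (Ci / (pinf/(2*P))) * m ^ (-pinf)) * Wf p w b) := by
  have h1e : (1:ℝ) ≤ Real.exp 1 := by nlinarith [Real.add_one_le_exp (1:ℝ)]
  have hm1 : 1 ≤ m := le_trans h1e hm
  have hm0 : 0 < m := lt_of_lt_of_le one_pos hm1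
  have hP0 : (0:ℝ) < P := lt_of_lt_of_le one_pos hP1
  have hA₁0 : (0:ℝ) < A₁ := lt_of_lt_of_le one_pos hA₁1
  set δ₀ : ℝ := pinf/4 with hδ₀def
  set ε : ℝ := pinf/(2*P) with hεdef
  have hδ0 : 0 < δ₀ := by rw [hδ₀def]; positivity
  have hε0 : 0 < ε := by rw [hεdef]; positivity
  have hεP : ε * P = pinf/2 := by rw [hεdef]; field_simp
  set x₁ : ℝ := Real.exp (Ci / δ₀) with hx₁def
  have hx₁1 : 1 ≤ x₁ := by
    rw [hx₁def, ← Real.exp_zero]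
    exact Real.exp_le_exp.mpr (div_nonneg hCi.le hδ0.le)
  set s₂ : ℝ := m ^ ε with hs₂def
  have hs₂1 : 1 ≤ s₂ := by
    rw [hs₂def, show (1:ℝ) = m ^ (0:ℝ) by rw [Real.rpow_zero]]
    exact Real.rpow_le_rpow_of_exponent_le hm1 hε0.le
  have hs₂0 : 0 < s₂ := lt_of_lt_of_le one_pos hs₂1
  have hlogm : 1 ≤ Real.log m := by
    rw [Real.le_log_iff_exp_le hm0]
    simpa using hm
  have hlogm0 : 0 < Real.log m := lt_of_lt_of_le one_pos hlogm
  set g : ℝ → ℝ≥0∞ := (Ioo (0:ℝ) b).indicator (fun x => ENNReal.ofReal ((w x / m) ^ p x))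
    with hg
  have hcov : Ioi (0:ℝ) ⊆ Ioc 0 x₁ ∪ (Ioc x₁ s₂ ∪ Ioi s₂) := by
    intro y hy
    rcases le_or_gt y x₁ with h | h
    · exact Or.inl ⟨hy, h⟩
    rcases le_or_gt y s₂ with h' | h'
    · exact Or.inr (Or.inl ⟨h, h'⟩)
    · exact Or.inr (Or.inr h')
  have hsplit : Md p w m b ≤
      (∫⁻ x in Ioc (0:ℝ) x₁, g x) + ((∫⁻ x in Ioc x₁ s₂, g x) + ∫⁻ x in Ioi s₂, g x) := by
    rw [Md, ← ind_int (fun x => ENNReal.ofReal ((w x / m) ^ p x)) b]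
    refine le_trans (lintegral_mono_set hcov) ?_
    refine le_trans (lintegral_union_le _ _ _) ?_
    exact add_le_add_right (lintegral_union_le _ _ _) _
  refine hsplit.trans (add_le_add ?_ (add_le_add ?_ ?_))
  · -- piece 1
    refine le_trans (piece_bound hw0 hm0 measurableSet_Ioc (fun x hx => hx.1)
      (c := m ^ (-pm)) (by positivity) ?_) ?_
    · intro x hx
      exact Real.rpow_le_rpow_of_exponent_le hm1 (neg_le_neg (hpmle x hx.1))
    · have ht : ∫⁻ x in Ioc (0:ℝ) x₁,
          (Ioo (0:ℝ) b).indicator (fun x => ENNReal.ofReal (w x ^ p x)) x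
          ≤ Wf p w (x₁ + 1) := by
        rw [Wf]
        exact tail_le _ (fun x hx => ⟨hx.1, lt_of_le_of_lt hx.2 (by linarith)⟩)
      calc ENNReal.ofReal (m ^ (-pm)) * ∫⁻ x in Ioc (0:ℝ) x₁,
            (Ioo (0:ℝ) b).indicator (fun x => ENNReal.ofReal (w x ^ p x)) x
          ≤ ENNReal.ofReal (m ^ (-pm)) * ENNReal.ofReal ((A₁ * (x₁ + 1)) ^ P) :=
            mul_le_mul_right (ht.trans (hWgrow (x₁ + 1) (by linarith))) _
        _ = ENNReal.ofReal ((A₁ * (x₁ + 1)) ^ P * m ^ (-pm)) := by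
            rw [← ENNReal.ofReal_mul (by positivity), mul_comm]
  · -- piece 2
    refine le_trans (piece_bound hw0 hm0 measurableSet_Ioc
      (fun x hx => lt_trans (lt_of_lt_of_le one_pos hx₁1) hx.1)
      (c := m ^ (δ₀ - pinf)) (by positivity) ?_) ?_
    · intro x hx
      have hxx : x₁ < x := hx.1
      have hx0 : (0:ℝ) < x := lt_trans (lt_of_lt_of_le one_pos hx₁1) hxx
      have hlogx : Ci/δ₀ ≤ Real.log (Real.exp 1 + x) := by
        rw [Real.le_log_iff_exp_le (by positivity)]
        rw [← hx₁def]
        nlinarith [Real.exp_pos (1:ℝ)]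
      have hΔx : Ci / Real.log (Real.exp 1 + x) ≤ δ₀ := by
        have hlp : (0:ℝ) < Real.log (Real.exp 1 + x) :=
          lt_of_lt_of_le (div_pos hCi hδ0) hlogx
        rw [div_le_iff₀ hlp]
        have hid : δ₀ * (Ci/δ₀) = Ci := by field_simp
        nlinarith [mul_le_mul_of_nonneg_left hlogx hδ0.le]
      have hlow : pinf - δ₀ ≤ p x := by
        have h := abs_le.mp (hΔ x hx0)
        linarith [h.1, hΔx]
      exact Real.rpow_le_rpow_of_exponent_le hm1 (by linarith)
    · have ht : ∫⁻ x in Ioc x₁ s₂,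
          (Ioo (0:ℝ) b).indicator (fun x => ENNReal.ofReal (w x ^ p x)) x
          ≤ Wf p w (s₂ + 1) := by
        rw [Wf]
        refine tail_le _ (fun x hx => ⟨lt_trans (lt_of_lt_of_le one_pos hx₁1) hx.1,
          lt_of_le_of_lt hx.2 (by linarith)⟩)
      calc ENNReal.ofReal (m ^ (δ₀ - pinf)) * ∫⁻ x in Ioc x₁ s₂,
            (Ioo (0:ℝ) b).indicator (fun x => ENNReal.ofReal (w x ^ p x)) x
          ≤ ENNReal.ofReal (m ^ (δ₀ - pinf)) * ENNReal.ofReal ((A₁ * (s₂ + 1)) ^ P) :=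
            mul_le_mul_right (ht.trans (hWgrow (s₂ + 1) (by linarith))) _
        _ = ENNReal.ofReal (m ^ (δ₀ - pinf) * (A₁ * (s₂ + 1)) ^ P) :=
            (ENNReal.ofReal_mul (by positivity)).symm
        _ ≤ ENNReal.ofReal ((2*A₁) ^ P * m ^ (-δ₀)) := by
            apply ENNReal.ofReal_le_ofReal
            calc m ^ (δ₀ - pinf) * (A₁ * (s₂ + 1)) ^ P
                ≤ m ^ (δ₀ - pinf) * ((2*A₁) ^ P * m ^ (pinf/2)) := by
                  refine mul_le_mul_of_nonneg_left ?_ (Real.rpow_nonneg hm0.le _)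
                  calc (A₁ * (s₂ + 1)) ^ P ≤ (2*A₁*(m ^ ε)) ^ P := by
                        refine Real.rpow_le_rpow (by positivity) ?_ hP0.le
                        rw [← hs₂def]
                        nlinarith
                    _ = (2*A₁) ^ P * m ^ (ε*P) := by
                        rw [Real.mul_rpow (by positivity) (Real.rpow_nonneg hm0.le _),
                          ← Real.rpow_mul hm0.le]
                    _ = (2*A₁) ^ P * m ^ (pinf/2) := by rw [hεP]
              _ = (2*A₁) ^ P * (m ^ (δ₀ - pinf) * m ^ (pinf/2)) := by ring
              _ = (2*A₁) ^ P * m ^ (-δ₀) := by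
                  rw [← Real.rpow_add hm0]
                  congr 1
                  rw [hδ₀def]
                  ring
  · -- piece 3
    refine le_trans (piece_bound hw0 hm0 measurableSet_Ioi
      (fun x hx => lt_trans hs₂0 hx)
      (c := Real.exp (Ci/ε) * m ^ (-pinf)) (by positivity) ?_) ?_
    · intro x hx
      have hxs : s₂ < x := hx
      have hx0 : (0:ℝ) < x := lt_trans hs₂0 hxs
      have hlogx : ε * Real.log m ≤ Real.log (Real.exp 1 + x) := by
        rw [Real.le_log_iff_exp_le (by positivity)]
        calc Real.exp (ε * Real.log m) = m ^ ε := by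
              rw [Real.rpow_def_of_pos hm0, mul_comm]
          _ ≤ Real.exp 1 + x := by
              rw [← hs₂def]
              nlinarith [Real.exp_pos (1:ℝ)]
      have hlogpos : (0:ℝ) < Real.log (Real.exp 1 + x) :=
        lt_of_lt_of_le (mul_pos hε0 hlogm0) hlogx
      have hmono : m ^ (-(p x)) ≤ m ^ (-pinf + Ci / Real.log (Real.exp 1 + x)) := by
        refine Real.rpow_le_rpow_of_exponent_le hm1 ?_
        have h := abs_le.mp (hΔ x hx0)
        linarith [h.1]
      have hexp : m ^ (Ci / Real.log (Real.exp 1 + x)) ≤ Real.exp (Ci/ε) := by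
        rw [Real.rpow_def_of_pos hm0]
        apply Real.exp_le_exp.mpr
        have h3 : Ci / Real.log (Real.exp 1 + x) ≤ Ci / (ε * Real.log m) := by
          rw [div_le_div_iff₀ hlogpos (mul_pos hε0 hlogm0)]
          exact mul_le_mul_of_nonneg_left hlogx hCi.le
        calc Real.log m * (Ci / Real.log (Real.exp 1 + x))
            ≤ Real.log m * (Ci / (ε * Real.log m)) :=
              mul_le_mul_of_nonneg_left h3 hlogm0.le
          _ = Ci/ε := by field_simp
      calc m ^ (-(p x)) ≤ m ^ (-pinf) * m ^ (Ci / Real.log (Real.exp 1 + x)) := by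
            rw [← Real.rpow_add hm0]
            exact hmono
        _ ≤ m ^ (-pinf) * Real.exp (Ci/ε) :=
            mul_le_mul_of_nonneg_left hexp (Real.rpow_nonneg hm0.le _)
        _ = Real.exp (Ci/ε) * m ^ (-pinf) := mul_comm _ _
    · refine mul_le_mul_right ?_ _
      have h4 : ∫⁻ x in Ioi s₂,
          (Ioo (0:ℝ) b).indicator (fun x => ENNReal.ofReal (w x ^ p x)) x
          ≤ ∫⁻ x in Ioi (0:ℝ),
            (Ioo (0:ℝ) b).indicator (fun x => ENNReal.ofReal (w x ^ p x)) x :=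
        lintegral_mono_set (fun x hx => lt_trans hs₂0 hx)
      rw [ind_int] at h4
      exact h4


lemma est_two
    (hw0 : ∀ x ∈ Ioi (0:ℝ), 0 ≤ w x)
    {pinf Ci P A₁ : ℝ}
    (hpinf0 : 0 < pinf) (hCi : 0 < Ci)
    (hP1 : 1 ≤ P)
    (hΔ : ∀ x ∈ Ioi (0:ℝ), |p x - pinf| ≤ Ci / Real.log (Real.exp 1 + x))
    (hA₁1 : 1 ≤ A₁)
    (hWgrow : ∀ s : ℝ, 1 ≤ s → Wf p w s ≤ ENNReal.ofReal ((A₁ * s) ^ P))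
    {b m : ℝ} (hm : Real.exp 1 ≤ m) :
    Wf p w b ≤
      ENNReal.ofReal ((A₁ * (Real.exp (Ci / (pinf/4)) + 1)) ^ P)
      + (ENNReal.ofReal ((2*A₁) ^ P * m ^ (pinf/2))
        + ENNReal.ofReal (Real.exp (Ci / (pinf/(2*P))) * m ^ pinf) * Md p w m b) := by
  have h1e : (1:ℝ) ≤ Real.exp 1 := by nlinarith [Real.add_one_le_exp (1:ℝ)]
  have hm1 : 1 ≤ m := le_trans h1e hm
  have hm0 : 0 < m := lt_of_lt_of_le one_pos hm1
  have hP0 : (0:ℝ) < P := lt_of_lt_of_le one_pos hP1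
  have hA₁0 : (0:ℝ) < A₁ := lt_of_lt_of_le one_pos hA₁1
  set δ₀ : ℝ := pinf/4 with hδ₀def
  set ε : ℝ := pinf/(2*P) with hεdef
  have hδ0 : 0 < δ₀ := by rw [hδ₀def]; positivity
  have hε0 : 0 < ε := by rw [hεdef]; positivity
  have hεP : ε * P = pinf/2 := by rw [hεdef]; field_simp
  set x₁ : ℝ := Real.exp (Ci / δ₀) with hx₁def
  have hx₁1 : 1 ≤ x₁ := by
    rw [hx₁def, ← Real.exp_zero]
    exact Real.exp_le_exp.mpr (div_nonneg hCi.le hδ0.le)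
  set s₂ : ℝ := m ^ ε with hs₂def
  have hs₂1 : 1 ≤ s₂ := by
    rw [hs₂def, show (1:ℝ) = m ^ (0:ℝ) by rw [Real.rpow_zero]]
    exact Real.rpow_le_rpow_of_exponent_le hm1 hε0.le
  have hs₂0 : 0 < s₂ := lt_of_lt_of_le one_pos hs₂1
  have hlogm : 1 ≤ Real.log m := by
    rw [Real.le_log_iff_exp_le hm0]
    simpa using hm
  have hlogm0 : 0 < Real.log m := lt_of_lt_of_le one_pos hlogm
  set g : ℝ → ℝ≥0∞ := (Ioo (0:ℝ) b).indicator (fun x => ENNReal.ofReal (w x ^ p x)) with hg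
  have hcov : Ioi (0:ℝ) ⊆ Ioc 0 x₁ ∪ (Ioc x₁ s₂ ∪ Ioi s₂) := by
    intro y hy
    rcases le_or_gt y x₁ with h | h
    · exact Or.inl ⟨hy, h⟩
    rcases le_or_gt y s₂ with h' | h'
    · exact Or.inr (Or.inl ⟨h, h'⟩)
    · exact Or.inr (Or.inr h')
  have hsplit : Wf p w b ≤
      (∫⁻ x in Ioc (0:ℝ) x₁, g x) + ((∫⁻ x in Ioc x₁ s₂, g x) + ∫⁻ x in Ioi s₂, g x) := by
    rw [Wf, ← ind_int (fun x => ENNReal.ofReal (w x ^ p x)) b]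
    refine le_trans (lintegral_mono_set hcov) ?_
    refine le_trans (lintegral_union_le _ _ _) ?_
    exact add_le_add_right (lintegral_union_le _ _ _) _
  refine hsplit.trans (add_le_add ?_ (add_le_add ?_ ?_))
  · -- piece 1
    have ht : ∫⁻ x in Ioc (0:ℝ) x₁, g x ≤ Wf p w (x₁ + 1) := by
      rw [Wf, hg]
      exact tail_le _ (fun x hx => ⟨hx.1, lt_of_le_of_lt hx.2 (by linarith)⟩)
    exact ht.trans (hWgrow (x₁ + 1) (by linarith))
  · -- piece 2
    have ht : ∫⁻ x in Ioc x₁ s₂, g x ≤ Wf p w (s₂ + 1) := by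
      rw [Wf, hg]
      exact tail_le _ (fun x hx => ⟨lt_trans (lt_of_lt_of_le one_pos hx₁1) hx.1,
        lt_of_le_of_lt hx.2 (by linarith)⟩)
    refine le_trans (ht.trans (hWgrow (s₂ + 1) (by linarith))) ?_
    apply ENNReal.ofReal_le_ofReal
    calc (A₁ * (s₂ + 1)) ^ P ≤ (2*A₁*(m ^ ε)) ^ P := by
          refine Real.rpow_le_rpow (by positivity) ?_ hP0.le
          rw [← hs₂def]
          nlinarith
      _ = (2*A₁) ^ P * m ^ (ε*P) := by
          rw [Real.mul_rpow (by positivity) (Real.rpow_nonneg hm0.le _),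
            ← Real.rpow_mul hm0.le]
      _ = (2*A₁) ^ P * m ^ (pinf/2) := by rw [hεP]
  · -- piece 3
    refine le_trans (piece_bound' hw0 hm0 measurableSet_Ioi
      (fun x hx => lt_trans hs₂0 hx)
      (c := Real.exp (Ci/ε) * m ^ pinf) (by positivity) ?_) ?_
    · intro x hx
      have hxs : s₂ < x := hx
      have hx0 : (0:ℝ) < x := lt_trans hs₂0 hxs
      have hlogx : ε * Real.log m ≤ Real.log (Real.exp 1 + x) := by
        rw [Real.le_log_iff_exp_le (by positivity)]
        calc Real.exp (ε * Real.log m) = m ^ ε := by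
              rw [Real.rpow_def_of_pos hm0, mul_comm]
          _ ≤ Real.exp 1 + x := by
              rw [← hs₂def]
              nlinarith [Real.exp_pos (1:ℝ)]
      have hlogpos : (0:ℝ) < Real.log (Real.exp 1 + x) :=
        lt_of_lt_of_le (mul_pos hε0 hlogm0) hlogx
      have hmono : m ^ (p x) ≤ m ^ (pinf + Ci / Real.log (Real.exp 1 + x)) := by
        refine Real.rpow_le_rpow_of_exponent_le hm1 ?_
        have h := abs_le.mp (hΔ x hx0)
        linarith [h.2]
      have hexp : m ^ (Ci / Real.log (Real.exp 1 + x)) ≤ Real.exp (Ci/ε) := by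
        rw [Real.rpow_def_of_pos hm0]
        apply Real.exp_le_exp.mpr
        have h3 : Ci / Real.log (Real.exp 1 + x) ≤ Ci / (ε * Real.log m) := by
          rw [div_le_div_iff₀ hlogpos (mul_pos hε0 hlogm0)]
          exact mul_le_mul_of_nonneg_left hlogx hCi.le
        calc Real.log m * (Ci / Real.log (Real.exp 1 + x))
            ≤ Real.log m * (Ci / (ε * Real.log m)) :=
              mul_le_mul_of_nonneg_left h3 hlogm0.le
          _ = Ci/ε := by field_simp
      calc m ^ (p x) ≤ m ^ pinf * m ^ (Ci / Real.log (Real.exp 1 + x)) := by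
            rw [← Real.rpow_add hm0]
            exact hmono
        _ ≤ m ^ pinf * Real.exp (Ci/ε) :=
            mul_le_mul_of_nonneg_left hexp (Real.rpow_nonneg hm0.le _)
        _ = Real.exp (Ci/ε) * m ^ pinf := mul_comm _ _
    · refine mul_le_mul_right ?_ _
      have h4 : ∫⁻ x in Ioi s₂,
          (Ioo (0:ℝ) b).indicator (fun x => ENNReal.ofReal ((w x / m) ^ p x)) x
          ≤ ∫⁻ x in Ioi (0:ℝ),
            (Ioo (0:ℝ) b).indicator (fun x => ENNReal.ofReal ((w x / m) ^ p x)) x :=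
        lintegral_mono_set (fun x hx => lt_trans hs₂0 hx)
      rw [ind_int] at h4
      exact h4


end Aux12

set_option maxHeartbeats 4000000 in
theorem statement12 (p w : ℝ → ℝ) (pinf : ℝ) (hp : IsExponent p) (h0 : LH0 p)
    (hpinf : 1 ≤ pinf) (hinf : LHinfWith p pinf) (hpm : 1 < pMinus p)
    (hw : IsWeight w) (hA : Ap0 p w) :
    ∃ c₁ > (0:ℝ), ∃ c₂ > (0:ℝ), ∀ b > (0:ℝ),
      1 ≤ lux p (indicator (Ioo (0:ℝ) b) w) →
      ENNReal.ofReal c₁ *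
          (∫⁻ x in Ioo (0:ℝ) b, ENNReal.ofReal (w x ^ p x)) ^ (1/pinf) ≤
          lux p (indicator (Ioo (0:ℝ) b) w) ∧
        lux p (indicator (Ioo (0:ℝ) b) w) ≤
          ENNReal.ofReal c₂ *
            (∫⁻ x in Ioo (0:ℝ) b, ENNReal.ofReal (w x ^ p x)) ^ (1/pinf) := by
  classical
  obtain ⟨hpmeas, hp1, hpbdd⟩ := hp
  obtain ⟨hwm, hw0, hwpos, hwloc⟩ := hw
  obtain ⟨Ci, hCi, hΔ⟩ := hinf
  obtain ⟨C, hC, hAc⟩ := hA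
  have hone : (1:ℝ) ∈ Ioi (0:ℝ) := by norm_num
  obtain ⟨P, hPdef⟩ : ∃ t : ℝ, t = pPlus p := ⟨_, rfl⟩
  have hpP : ∀ x ∈ Ioi (0:ℝ), p x ≤ P := fun x hx => hPdef ▸ le_csSup hpbdd ⟨x, hx, rfl⟩
  have hP1 : 1 ≤ P := le_trans (hp1 1 hone) (hpP 1 hone)
  have hP0 : (0:ℝ) < P := lt_of_lt_of_le one_pos hP1
  obtain ⟨pm, hpmdef⟩ : ∃ t : ℝ, t = pMinus p := ⟨_, rfl⟩
  have hpmle : ∀ x ∈ Ioi (0:ℝ), pm ≤ p x := fun x hx => hpmdef ▸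
    csInf_le ⟨1, by rintro y ⟨z, hz, rfl⟩; exact hp1 z hz⟩ ⟨x, hx, rfl⟩
  have hpm1 : (1:ℝ) < pm := hpmdef ▸ hpm
  have hpm0 : (0:ℝ) < pm := lt_trans one_pos hpm1
  have hpinf0 : (0:ℝ) < pinf := lt_of_lt_of_le one_pos hpinf
  have hp0 : ∀ x ∈ Ioi (0:ℝ), 0 ≤ p x := fun x hx => le_trans zero_le_one (hp1 x hx)
  have hq1 : ∀ x ∈ Ioi (0:ℝ), 1 ≤ conj p x := by
    intro x hx
    have h1 : 1 < p x := lt_of_lt_of_le hpm1 (hpmle x hx)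
    show (1:ℝ) ≤ p x / (p x - 1)
    rw [le_div_iff₀ (by linarith)]
    linarith
  have hq0 : ∀ x ∈ Ioi (0:ℝ), 0 ≤ conj p x := fun x hx => le_trans zero_le_one (hq1 x hx)
  have hwinv_pos : ∀ᵐ x ∂(volume.restrict (Ioi (0:ℝ))), 0 < (w x)⁻¹ := by
    filter_upwards [hwpos] with x hx using inv_pos.mpr hx
  have hβpos : 0 < lux (conj p) ((Ioo (0:ℝ) 1).indicator fun y => (w y)⁻¹) :=
    Aux12.lux_pos hq1 hwm.inv hwinv_pos
  have hN1pos : 0 < lux p ((Ioo (0:ℝ) 1).indicator w) := Aux12.lux_pos hp1 hwm hwpos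
  have hA1 := hAc 1 one_pos
  rw [Real.one_rpow, mul_one] at hA1
  have hβfin : lux (conj p) ((Ioo (0:ℝ) 1).indicator fun y => (w y)⁻¹) ≠ ∞ := by
    intro htop
    rw [htop, ENNReal.mul_top hN1pos.ne', top_le_iff] at hA1
    exact ENNReal.ofReal_ne_top hA1
  obtain ⟨Br, hBr0, hBreq⟩ : ∃ r : ℝ, 0 < r ∧
      lux (conj p) ((Ioo (0:ℝ) 1).indicator fun y => (w y)⁻¹) = ENNReal.ofReal r :=
    ⟨_, ENNReal.toReal_pos hβpos.ne' hβfin, (ENNReal.ofReal_toReal hβfin).symm⟩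
  obtain ⟨A₁, hA₁1, hA₁C⟩ : ∃ a : ℝ, 1 ≤ a ∧ C / Br ≤ a :=
    ⟨max 1 (C / Br), le_max_left _ _, le_max_right _ _⟩
  have hA₁0 : (0:ℝ) < A₁ := lt_of_lt_of_le one_pos hA₁1
  have hNle : ∀ s : ℝ, 1 ≤ s →
      lux p ((Ioo (0:ℝ) s).indicator w) ≤ ENNReal.ofReal (A₁ * s) := by
    intro s hs
    have h1 := hAc s (by linarith)
    rw [Real.rpow_one] at h1
    have h2 : lux (conj p) ((Ioo (0:ℝ) 1).indicator fun y => (w y)⁻¹)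
        ≤ lux (conj p) ((Ioo (0:ℝ) s).indicator fun y => (w y)⁻¹) :=
      Aux12.lux_mono_b hq0 hs
    have h3 : lux p ((Ioo (0:ℝ) s).indicator w) *
        lux (conj p) ((Ioo (0:ℝ) 1).indicator fun y => (w y)⁻¹) ≤ ENNReal.ofReal (C * s) :=
      le_trans (mul_le_mul_right h2 _) h1
    have h4 := (ENNReal.le_div_iff_mul_le (Or.inl hβpos.ne') (Or.inl hβfin)).mpr h3
    refine h4.trans ?_
    rw [hBreq, ← ENNReal.ofReal_div_of_pos hBr0]
    apply ENNReal.ofReal_le_ofReal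
    calc C * s / Br = (C / Br) * s := by ring
      _ ≤ A₁ * s := mul_le_mul_of_nonneg_right hA₁C (by linarith)
  have hNfin : ∀ b : ℝ, lux p ((Ioo (0:ℝ) b).indicator w) ≠ ∞ := by
    intro b
    have h1 : lux p ((Ioo (0:ℝ) b).indicator w)
        ≤ lux p ((Ioo (0:ℝ) (max b 1)).indicator w) :=
      Aux12.lux_mono_b hp0 (le_max_left _ _)
    exact ((h1.trans (hNle _ (le_max_right _ _))).trans_lt ENNReal.ofReal_lt_top).ne
  have hWgrow : ∀ s : ℝ, 1 ≤ s → Aux12.Wf p w s ≤ ENNReal.ofReal ((A₁ * s) ^ P) := by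
    intro s hs
    have hs0 : (0:ℝ) < A₁ * s := by positivity
    have h1 : (1:ℝ) ≤ (A₁ * s) ^ P := by
      calc (1:ℝ) = (A₁ * s) ^ (0:ℝ) := (Real.rpow_zero _).symm
        _ ≤ (A₁ * s) ^ P := Real.rpow_le_rpow_of_exponent_le (by nlinarith) hP0.le
    refine le_trans (Aux12.wf_le_max hp1 hw0 hpP hP1 s) (max_le ?_ ?_)
    · calc (1:ℝ≥0∞) = ENNReal.ofReal 1 := by simp
        _ ≤ ENNReal.ofReal ((A₁ * s) ^ P) := ENNReal.ofReal_le_ofReal h1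
    · have h2 := ENNReal.rpow_le_rpow (hNle s hs) hP0.le
      rwa [ENNReal.ofReal_rpow_of_pos hs0] at h2
  -- constants
  obtain ⟨Eε, hEεdef⟩ : ∃ t : ℝ, t = Real.exp (Ci / (pinf/(2*P))) := ⟨_, rfl⟩
  obtain ⟨x₁, hx₁def⟩ : ∃ t : ℝ, t = Real.exp (Ci / (pinf/4)) := ⟨_, rfl⟩
  obtain ⟨D₁, hD₁def⟩ : ∃ t : ℝ, t = (A₁ * (x₁ + 1)) ^ P := ⟨_, rfl⟩
  obtain ⟨D₂, hD₂def⟩ : ∃ t : ℝ, t = (2*A₁) ^ P := ⟨_, rfl⟩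
  have hx₁0 : (0:ℝ) < x₁ := by rw [hx₁def]; exact Real.exp_pos _
  have hD₁0 : (0:ℝ) < D₁ := by
    rw [hD₁def]; exact Real.rpow_pos_of_pos (by positivity) _
  have hD₂0 : (0:ℝ) < D₂ := by
    rw [hD₂def]; exact Real.rpow_pos_of_pos (by positivity) _
  have hEε0 : (0:ℝ) < Eε := by rw [hEεdef]; exact Real.exp_pos _
  have h1e : (1:ℝ) ≤ Real.exp 1 := by nlinarith [Real.add_one_le_exp (1:ℝ)]
  obtain ⟨M₁, hM₁e, hM₁a, hM₁b⟩ : ∃ t : ℝ, Real.exp 1 ≤ t ∧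
      (4*D₁) ^ pm⁻¹ ≤ t ∧ (4*D₂) ^ ((4:ℝ)/pinf) ≤ t :=
    ⟨max (Real.exp 1) (max ((4*D₁) ^ pm⁻¹) ((4*D₂) ^ ((4:ℝ)/pinf))), le_max_left _ _,
      le_trans (le_max_left _ _) (le_max_right _ _),
      le_trans (le_max_right _ _) (le_max_right _ _)⟩
  have hM₁1 : (1:ℝ) ≤ M₁ := le_trans h1e hM₁e
  have hM₁0 : (0:ℝ) < M₁ := lt_of_lt_of_le one_pos hM₁1
  obtain ⟨K, hK4, hKM⟩ : ∃ t : ℝ, 4*Eε ≤ t ∧ M₁ ^ pinf ≤ t :=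
    ⟨max (4*Eε) (M₁ ^ pinf), le_max_left _ _, le_max_right _ _⟩
  have hK0 : (0:ℝ) < K := lt_of_lt_of_le (by linarith) hK4
  have hK1 : (1:ℝ) ≤ K := by
    refine le_trans ?_ hKM
    calc (1:ℝ) = 1 ^ pinf := (Real.one_rpow _).symm
      _ ≤ M₁ ^ pinf := Real.rpow_le_rpow zero_le_one hM₁1 hpinf0.le
  obtain ⟨F, hFdef⟩ : ∃ t : ℝ, t = (D₁ + D₂ + Eε) * 2 ^ pinf := ⟨_, rfl⟩
  have hF0 : (0:ℝ) < F := by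
    rw [hFdef]
    have h2p : (0:ℝ) < 2 ^ pinf := Real.rpow_pos_of_pos two_pos _
    nlinarith
  obtain ⟨G, hGdef⟩ : ∃ t : ℝ, t = ((Real.exp 1) ^ P) ^ (1/pinf) := ⟨_, rfl⟩
  have hG0 : (0:ℝ) < G := by
    rw [hGdef]
    exact Real.rpow_pos_of_pos (Real.rpow_pos_of_pos (Real.exp_pos 1) _) _
  have h1expP : (1:ℝ) ≤ (Real.exp 1) ^ P := by
    calc (1:ℝ) = Real.exp 1 ^ (0:ℝ) := (Real.rpow_zero _).symm
      _ ≤ Real.exp 1 ^ P := Real.rpow_le_rpow_of_exponent_le h1e hP0.le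
  have hpinv0 : (0:ℝ) ≤ 1/pinf := by positivity
  refine ⟨min G⁻¹ ((F ^ (1/pinf))⁻¹), lt_min (inv_pos.mpr hG0)
    (inv_pos.mpr (Real.rpow_pos_of_pos hF0 _)), K ^ (1/pinf),
    Real.rpow_pos_of_pos hK0 _, ?_⟩
  intro b hb hNb1
  have hNfinb : lux p (indicator (Ioo (0:ℝ) b) w) ≠ ∞ := hNfin b
  have hWfin : Aux12.Wf p w b ≠ ∞ := by
    refine ((Aux12.wf_le_max hp1 hw0 hpP hP1 b).trans_lt ?_).ne
    exact max_lt ENNReal.one_lt_top (ENNReal.rpow_lt_top_of_nonneg hP0.le hNfinb)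
  have hW1 : 1 ≤ Aux12.Wf p w b := Aux12.one_le_wf hp1 hw0 hpP hP1 hNb1
  obtain ⟨Wr, hWeq, hWr1⟩ : ∃ t : ℝ, Aux12.Wf p w b = ENNReal.ofReal t ∧ 1 ≤ t := by
    refine ⟨(Aux12.Wf p w b).toReal, (ENNReal.ofReal_toReal hWfin).symm, ?_⟩
    have h5 := (ENNReal.toReal_le_toReal (by simp) hWfin).mpr hW1
    simpa using h5
  have hWr0 : (0:ℝ) < Wr := lt_of_lt_of_le one_pos hWr1
  have hWfshow : (∫⁻ x in Ioo (0:ℝ) b, ENNReal.ofReal (w x ^ p x)) = Aux12.Wf p w b := rfl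
  rw [hWfshow]
  constructor
  · -- lower bound
    by_cases hcase : lux p (indicator (Ioo (0:ℝ) b) w) ≤ ENNReal.ofReal (Real.exp 1)
    · have hWle : Aux12.Wf p w b ≤ ENNReal.ofReal ((Real.exp 1) ^ P) := by
        refine le_trans (Aux12.wf_le_max hp1 hw0 hpP hP1 b) (max_le ?_ ?_)
        · calc (1:ℝ≥0∞) = ENNReal.ofReal 1 := by simp
            _ ≤ ENNReal.ofReal ((Real.exp 1) ^ P) := ENNReal.ofReal_le_ofReal h1expP
        · have h2 := ENNReal.rpow_le_rpow hcase hP0.le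
          rwa [ENNReal.ofReal_rpow_of_pos (Real.exp_pos 1)] at h2
      have hWrp : (Aux12.Wf p w b) ^ (1/pinf) ≤ ENNReal.ofReal G := by
        rw [hGdef, ← ENNReal.ofReal_rpow_of_pos (Real.rpow_pos_of_pos (Real.exp_pos 1) _)]
        exact ENNReal.rpow_le_rpow hWle hpinv0
      calc ENNReal.ofReal (min G⁻¹ ((F ^ (1/pinf))⁻¹)) * (Aux12.Wf p w b) ^ (1/pinf)
          ≤ ENNReal.ofReal G⁻¹ * ENNReal.ofReal G :=
            mul_le_mul' (ENNReal.ofReal_le_ofReal (min_le_left _ _)) hWrp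
        _ = ENNReal.ofReal (G⁻¹ * G) :=
            (ENNReal.ofReal_mul (inv_nonneg.mpr hG0.le)).symm
        _ = 1 := by rw [inv_mul_cancel₀ hG0.ne']; simp
        _ ≤ lux p (indicator (Ioo (0:ℝ) b) w) := hNb1
    · push_neg at hcase
      obtain ⟨Nr, hNreq, heNr⟩ : ∃ t : ℝ,
          lux p (indicator (Ioo (0:ℝ) b) w) = ENNReal.ofReal t ∧ Real.exp 1 < t := by
        refine ⟨(lux p (indicator (Ioo (0:ℝ) b) w)).toReal,
          (ENNReal.ofReal_toReal hNfinb).symm, ?_⟩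
        have h5 := (ENNReal.toReal_lt_toReal ENNReal.ofReal_ne_top hNfinb).mpr hcase
        rwa [ENNReal.toReal_ofReal (Real.exp_pos 1).le] at h5
      have hNr0 : (0:ℝ) < Nr := lt_trans (Real.exp_pos 1) heNr
      have hme : Real.exp 1 ≤ 2*Nr := by nlinarith [Real.exp_pos (1:ℝ)]
      have hm1 : (1:ℝ) ≤ 2*Nr := le_trans h1e hme
      have hm0 : (0:ℝ) < 2*Nr := by linarith
      have hNm : lux p (indicator (Ioo (0:ℝ) b) w) < ENNReal.ofReal (2*Nr) := by
        rw [hNreq]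
        exact (ENNReal.ofReal_lt_ofReal_iff hm0).mpr (by linarith)
      have hMd1 : Aux12.Md p w (2*Nr) b ≤ 1 := Aux12.mod_le_one hp1 hw0 hm0 hNm
      have hest := Aux12.est_two hw0 hpinf0 hCi hP1 hΔ hA₁1 hWgrow (b := b) hme
      rw [← hx₁def, ← hD₁def, ← hD₂def, ← hEεdef] at hest
      have hWle : Aux12.Wf p w b ≤ ENNReal.ofReal (F * Nr ^ pinf) := by
        refine hest.trans ?_
        have hb3 : ENNReal.ofReal (Eε * (2*Nr) ^ pinf) * Aux12.Md p w (2*Nr) b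
            ≤ ENNReal.ofReal (Eε * (2*Nr) ^ pinf) := by
          calc ENNReal.ofReal (Eε * (2*Nr) ^ pinf) * Aux12.Md p w (2*Nr) b
              ≤ ENNReal.ofReal (Eε * (2*Nr) ^ pinf) * 1 := mul_le_mul_right hMd1 _
            _ = ENNReal.ofReal (Eε * (2*Nr) ^ pinf) := mul_one _
        refine le_trans (add_le_add le_rfl (add_le_add le_rfl hb3)) ?_
        rw [← ENNReal.ofReal_add (mul_nonneg hD₂0.le (Real.rpow_nonneg hm0.le _))
            (mul_nonneg hEε0.le (Real.rpow_nonneg hm0.le _)),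
          ← ENNReal.ofReal_add hD₁0.le (add_nonneg
            (mul_nonneg hD₂0.le (Real.rpow_nonneg hm0.le _))
            (mul_nonneg hEε0.le (Real.rpow_nonneg hm0.le _)))]
        apply ENNReal.ofReal_le_ofReal
        have hmp1 : (1:ℝ) ≤ (2*Nr) ^ pinf := by
          calc (1:ℝ) = (2*Nr) ^ (0:ℝ) := (Real.rpow_zero _).symm
            _ ≤ (2*Nr) ^ pinf := Real.rpow_le_rpow_of_exponent_le hm1 hpinf0.le
        have hmp2 : (2*Nr) ^ (pinf/2) ≤ (2*Nr) ^ pinf :=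
          Real.rpow_le_rpow_of_exponent_le hm1 (by linarith)
        have hmpeq : (2*Nr) ^ pinf = 2 ^ pinf * Nr ^ pinf :=
          Real.mul_rpow (by norm_num) hNr0.le
        calc D₁ + (D₂ * (2*Nr) ^ (pinf/2) + Eε * (2*Nr) ^ pinf)
            ≤ D₁ * (2*Nr) ^ pinf + (D₂ * (2*Nr) ^ pinf + Eε * (2*Nr) ^ pinf) := by
              refine add_le_add ?_ (add_le_add ?_ le_rfl)
              · nlinarith [hD₁0, hmp1]
              · nlinarith [hD₂0, hmp2]
          _ = (D₁ + D₂ + Eε) * (2*Nr) ^ pinf := by ring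
          _ = F * Nr ^ pinf := by rw [hmpeq, hFdef]; ring
      have hWrp : (Aux12.Wf p w b) ^ (1/pinf) ≤ ENNReal.ofReal (F ^ (1/pinf) * Nr) := by
        refine le_trans (ENNReal.rpow_le_rpow hWle hpinv0) ?_
        rw [ENNReal.ofReal_rpow_of_pos (mul_pos hF0 (Real.rpow_pos_of_pos hNr0 _))]
        apply ENNReal.ofReal_le_ofReal
        rw [Real.mul_rpow hF0.le (Real.rpow_nonneg hNr0.le _)]
        have hNrr : (Nr ^ pinf) ^ (1/pinf) = Nr := by
          rw [← Real.rpow_mul hNr0.le, mul_one_div, div_self hpinf0.ne', Real.rpow_one]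
        rw [hNrr]
      calc ENNReal.ofReal (min G⁻¹ ((F ^ (1/pinf))⁻¹)) * (Aux12.Wf p w b) ^ (1/pinf)
          ≤ ENNReal.ofReal ((F ^ (1/pinf))⁻¹) * ENNReal.ofReal (F ^ (1/pinf) * Nr) :=
            mul_le_mul' (ENNReal.ofReal_le_ofReal (min_le_right _ _)) hWrp
        _ = ENNReal.ofReal ((F ^ (1/pinf))⁻¹ * (F ^ (1/pinf) * Nr)) :=
            (ENNReal.ofReal_mul (inv_nonneg.mpr (Real.rpow_nonneg hF0.le _))).symm
        _ = ENNReal.ofReal Nr := by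
            congr 1
            rw [← mul_assoc, inv_mul_cancel₀ (Real.rpow_pos_of_pos hF0 _).ne', one_mul]
        _ = lux p (indicator (Ioo (0:ℝ) b) w) := hNreq.symm
  · -- upper bound
    have hKW0 : (0:ℝ) < K * Wr := mul_pos hK0 hWr0
    have hm0 : (0:ℝ) < (K * Wr) ^ (1/pinf) := Real.rpow_pos_of_pos hKW0 _
    have hmpinf : ((K * Wr) ^ (1/pinf)) ^ pinf = K * Wr := by
      rw [← Real.rpow_mul hKW0.le, one_div, inv_mul_cancel₀ hpinf0.ne', Real.rpow_one]
    have hmM₁ : M₁ ≤ (K * Wr) ^ (1/pinf) := by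
      have h1 : M₁ ^ pinf ≤ K * Wr := by
        refine le_trans hKM ?_
        nlinarith [hK0, hWr1]
      calc M₁ = (M₁ ^ pinf) ^ (1/pinf) := by
            rw [← Real.rpow_mul hM₁0.le, mul_one_div, div_self hpinf0.ne', Real.rpow_one]
        _ ≤ (K * Wr) ^ (1/pinf) :=
            Real.rpow_le_rpow (Real.rpow_nonneg hM₁0.le _) h1 hpinv0
    have hme : Real.exp 1 ≤ (K * Wr) ^ (1/pinf) := le_trans hM₁e hmM₁
    have hT1 : D₁ * ((K * Wr) ^ (1/pinf)) ^ (-pm) ≤ 4⁻¹ := by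
      have hm4 : (4*D₁) ^ pm⁻¹ ≤ (K * Wr) ^ (1/pinf) := le_trans hM₁a hmM₁
      have h4D : (0:ℝ) < 4*D₁ := by linarith
      have h1 : 4*D₁ ≤ ((K * Wr) ^ (1/pinf)) ^ pm := by
        calc 4*D₁ = ((4*D₁) ^ pm⁻¹) ^ pm := by
              rw [← Real.rpow_mul h4D.le, inv_mul_cancel₀ hpm0.ne', Real.rpow_one]
          _ ≤ ((K * Wr) ^ (1/pinf)) ^ pm :=
              Real.rpow_le_rpow (Real.rpow_nonneg h4D.le _) hm4 hpm0.le
      have h2 : ((K * Wr) ^ (1/pinf)) ^ (-pm) ≤ (4*D₁)⁻¹ := by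
        rw [Real.rpow_neg hm0.le]
        exact inv_anti₀ h4D h1
      calc D₁ * ((K * Wr) ^ (1/pinf)) ^ (-pm) ≤ D₁ * (4*D₁)⁻¹ :=
            mul_le_mul_of_nonneg_left h2 hD₁0.le
        _ = 4⁻¹ := by field_simp [hD₁0.ne']
    have hT2 : D₂ * ((K * Wr) ^ (1/pinf)) ^ (-(pinf/4)) ≤ 4⁻¹ := by
      have hm4 : (4*D₂) ^ ((4:ℝ)/pinf) ≤ (K * Wr) ^ (1/pinf) := le_trans hM₁b hmM₁
      have h4D : (0:ℝ) < 4*D₂ := by linarith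
      have h1 : 4*D₂ ≤ ((K * Wr) ^ (1/pinf)) ^ (pinf/4) := by
        calc 4*D₂ = ((4*D₂) ^ ((4:ℝ)/pinf)) ^ (pinf/4) := by
              rw [← Real.rpow_mul h4D.le,
                show (4:ℝ)/pinf * (pinf/4) = 1 by field_simp, Real.rpow_one]
          _ ≤ ((K * Wr) ^ (1/pinf)) ^ (pinf/4) :=
              Real.rpow_le_rpow (Real.rpow_nonneg h4D.le _) hm4 (by positivity)
      have h2 : ((K * Wr) ^ (1/pinf)) ^ (-(pinf/4)) ≤ (4*D₂)⁻¹ := by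
        rw [Real.rpow_neg hm0.le]
        exact inv_anti₀ h4D h1
      calc D₂ * ((K * Wr) ^ (1/pinf)) ^ (-(pinf/4)) ≤ D₂ * (4*D₂)⁻¹ :=
            mul_le_mul_of_nonneg_left h2 hD₂0.le
        _ = 4⁻¹ := by field_simp [hD₂0.ne']
    have hT3 : ENNReal.ofReal (Eε * ((K * Wr) ^ (1/pinf)) ^ (-pinf)) * Aux12.Wf p w b
        ≤ ENNReal.ofReal 4⁻¹ := by
      rw [hWeq, ← ENNReal.ofReal_mul
        (mul_nonneg hEε0.le (Real.rpow_nonneg hm0.le _))]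
      apply ENNReal.ofReal_le_ofReal
      have hmneg : ((K * Wr) ^ (1/pinf)) ^ (-pinf) = (K*Wr)⁻¹ := by
        rw [Real.rpow_neg hm0.le, hmpinf]
      rw [hmneg]
      have heq2 : Eε * (K*Wr)⁻¹ * Wr = Eε / K := by
        field_simp
      rw [heq2, div_le_iff₀ hK0]
      linarith
    have hMd : Aux12.Md p w ((K * Wr) ^ (1/pinf)) b ≤ 1 := by
      refine le_trans (Aux12.est_one hw0 hpinf0 hCi hP1 hpmle hΔ hA₁1 hWgrow hme) ?_
      rw [← hx₁def, ← hD₁def, ← hD₂def, ← hEεdef]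
      calc ENNReal.ofReal (D₁ * ((K * Wr) ^ (1/pinf)) ^ (-pm))
            + (ENNReal.ofReal (D₂ * ((K * Wr) ^ (1/pinf)) ^ (-(pinf/4)))
              + ENNReal.ofReal (Eε * ((K * Wr) ^ (1/pinf)) ^ (-pinf)) * Aux12.Wf p w b)
          ≤ ENNReal.ofReal 4⁻¹ + (ENNReal.ofReal 4⁻¹ + ENNReal.ofReal 4⁻¹) :=
            add_le_add (ENNReal.ofReal_le_ofReal hT1)
              (add_le_add (ENNReal.ofReal_le_ofReal hT2) hT3)
        _ = ENNReal.ofReal (4⁻¹ + (4⁻¹ + 4⁻¹)) := by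
            rw [ENNReal.ofReal_add (by norm_num) (by norm_num),
              ENNReal.ofReal_add (by norm_num) (by norm_num)]
        _ ≤ 1 := by
            refine ENNReal.ofReal_le_one.mpr ?_
            norm_num
    have hupper : lux p (indicator (Ioo (0:ℝ) b) w) ≤
        ENNReal.ofReal ((K * Wr) ^ (1/pinf)) :=
      Aux12.norm_le_of_mod hp1 hw0 hm0 hMd
    calc lux p (indicator (Ioo (0:ℝ) b) w) ≤ ENNReal.ofReal ((K * Wr) ^ (1/pinf)) := hupper
      _ = ENNReal.ofReal (K ^ (1/pinf)) * ENNReal.ofReal (Wr ^ (1/pinf)) := by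
          rw [← ENNReal.ofReal_mul (Real.rpow_nonneg hK0.le _),
            ← Real.mul_rpow hK0.le hWr0.le]
      _ = ENNReal.ofReal (K ^ (1/pinf)) * (Aux12.Wf p w b) ^ (1/pinf) := by
          rw [← ENNReal.ofReal_rpow_of_pos hWr0, ← hWeq]

end
end

section
/- Let p(·) ∈ P(0,∞) and 0<λ≤1 with p⁺ < 1/(1−λ) (p⁺<∞ when λ=1), and define q(·) by 1/q(x)=1/p(x)−(1−λ). Then for any weight w on (0,∞): w ∈ A_{p(·),q(·),0} if and only if w^{1/λ} ∈ A_{λq(·),0}. -/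
open MeasureTheory Set ENNReal Real

noncomputable section

lemma eLux_congr' {r₁ r₂ : ℝ → ℝ} {g₁ g₂ : ℝ → ℝ≥0∞} (hr : EqOn r₁ r₂ (Ioi 0))
    (hg : EqOn g₁ g₂ (Ioi 0)) : eLux r₁ g₁ = eLux r₂ g₂ := by
  unfold eLux
  congr 1
  ext μ
  have : (∫⁻ x in Ioi (0:ℝ), (g₁ x / μ) ^ (r₁ x)) = ∫⁻ x in Ioi (0:ℝ), (g₂ x / μ) ^ (r₂ x) := by
    apply lintegral_congr_ae
    filter_upwards [ae_restrict_mem measurableSet_Ioi] with x hx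
    rw [hr hx, hg hx]
  simp [this]

lemma key_rpow' (lam : ℝ) (hlam : 0 < lam) (r : ℝ → ℝ) (hr : ∀ x ∈ Ioi (0:ℝ), 0 ≤ r x)
    (g : ℝ → ℝ≥0∞) :
    eLux r g = (eLux (fun x => lam * r x) (fun x => g x ^ (1/lam))) ^ lam := by
  have hint : ∀ ν : ℝ≥0∞, (∫⁻ x in Ioi (0:ℝ), (g x / ν ^ lam) ^ (r x))
      = ∫⁻ x in Ioi (0:ℝ), ((g x ^ (1/lam)) / ν) ^ (lam * r x) := by
    intro ν
    apply lintegral_congr_ae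
    filter_upwards [ae_restrict_mem measurableSet_Ioi] with x hx
    have h0 := hr x hx
    rw [ENNReal.div_rpow_of_nonneg _ _ h0,
        ENNReal.div_rpow_of_nonneg _ _ (mul_nonneg hlam.le h0),
        ← ENNReal.rpow_mul, ← ENNReal.rpow_mul,
        show 1/lam * (lam * r x) = r x from by field_simp]
  have hSS : {μ : ℝ≥0∞ | 0 < μ ∧ ∫⁻ x in Ioi (0:ℝ), (g x / μ) ^ (r x) ≤ 1}
      = (fun ν : ℝ≥0∞ => ν ^ lam) ''
        {ν : ℝ≥0∞ | 0 < ν ∧ ∫⁻ x in Ioi (0:ℝ), ((g x ^ (1/lam)) / ν) ^ (lam * r x) ≤ 1} := by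
    ext μ
    simp only [mem_image, mem_setOf_eq]
    constructor
    · rintro ⟨hμ, hI⟩
      have hback : (μ ^ (1/lam)) ^ lam = μ := by
        rw [← ENNReal.rpow_mul, one_div_mul_cancel hlam.ne', ENNReal.rpow_one]
      refine ⟨μ ^ (1/lam), ⟨?_, ?_⟩, hback⟩
      · rw [pos_iff_ne_zero]
        simp [ENNReal.rpow_eq_zero_iff, hμ.ne',
          not_lt.mpr (by positivity : (0:ℝ) ≤ 1/lam), hlam.le]
      · rw [← hint, hback]; exact hI
    · rintro ⟨ν, ⟨hν, hJ⟩, rfl⟩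
      constructor
      · rw [pos_iff_ne_zero]
        simp [ENNReal.rpow_eq_zero_iff, hν.ne', not_lt.mpr hlam.le]
      · rw [hint]; exact hJ
  unfold eLux
  calc sInf {μ : ℝ≥0∞ | 0 < μ ∧ ∫⁻ x in Ioi (0:ℝ), (g x / μ) ^ (r x) ≤ 1}
      = sInf ((ENNReal.orderIsoRpow lam hlam) ''
          {ν : ℝ≥0∞ | 0 < ν ∧ ∫⁻ x in Ioi (0:ℝ), ((g x ^ (1/lam)) / ν) ^ (lam * r x) ≤ 1}) := by
        rw [hSS]; rfl
    _ = (ENNReal.orderIsoRpow lam hlam) (sInf {ν : ℝ≥0∞ | 0 < ν ∧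
          ∫⁻ x in Ioi (0:ℝ), ((g x ^ (1/lam)) / ν) ^ (lam * r x) ≤ 1}) := by
        rw [sInf_image]; exact ((ENNReal.orderIsoRpow lam hlam).map_sInf _).symm
    _ = _ := rfl

theorem statement13 (lam : ℝ) (hlam : 0 < lam) (hlam1 : lam ≤ 1)
    (p q w : ℝ → ℝ) (hp : IsExponent p) (hpp : (1 - lam) * pPlus p < 1)
    (hq : ∀ x ∈ Ioi (0:ℝ), 1 / q x = 1 / p x - (1 - lam))
    (hw : IsWeight w) :
    Apq0 p q lam w ↔ Ap0 (fun x => lam * q x) (fun x => w x ^ (1 / lam)) := by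
  obtain ⟨hpm, hp1, hpB⟩ := hp
  have h1mlam : 0 ≤ 1 - lam := by linarith
  have hlt : ∀ x ∈ Ioi (0:ℝ), (1 - lam) * p x < 1 := by
    intro x hx
    have hPle : p x ≤ pPlus p := le_csSup hpB ⟨x, hx, rfl⟩
    calc (1 - lam) * p x ≤ (1 - lam) * pPlus p := by nlinarith
      _ < 1 := hpp
  have hqpos : ∀ x ∈ Ioi (0:ℝ), 0 < q x := by
    intro x hx
    have hP1 := hp1 x hx
    have hP0 : 0 < p x := by linarith
    have h2 : 1 - lam < 1 / p x := (lt_div_iff₀ hP0).mpr (by linarith [hlt x hx])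
    have : 0 < 1 / q x := by rw [hq x hx]; linarith
    exact one_div_pos.mp this
  have hconjEq : EqOn (fun x => lam * conj p x) (conj (fun x => lam * q x)) (Ioi 0) := by
    intro x hx
    have hP1 := hp1 x hx
    have hQ := hq x hx
    have hQpos := hqpos x hx
    simp only [conj]
    rcases eq_or_lt_of_le hP1 with hP | hP
    · have hQl : lam * q x = 1 := by
        have h1 : 1 / q x = lam := by rw [hQ, ← hP]; ring
        rw [div_eq_iff hQpos.ne'] at h1
        linarith
      rw [← hP, hQl]
      norm_num
    · have hP0 : 0 < p x := by linarith
      have hQne : lam * q x ≠ 1 := by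
        intro h
        have h1 : 1 / q x = lam := by
          field_simp at h ⊢
          linarith
        rw [hQ] at h1
        have : 1 / p x = 1 := by linarith
        have : p x = 1 := by
          field_simp at this
          linarith
        linarith
      have hP1' : p x - 1 ≠ 0 := sub_ne_zero.mpr (by intro h; rw [h] at hP; linarith)
      have hQ1' : lam * q x - 1 ≠ 0 := by intro h; apply hQne; linarith
      have hkey : p x = q x - (1 - lam) * (p x * q x) := by
        have h2 : (1 / q x) * (p x * q x) = (1 / p x - (1 - lam)) * (p x * q x) := by
          rw [hQ]
        have h3 : (1 / q x) * (p x * q x) = p x := by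
          field_simp
        have h4 : (1 / p x - (1 - lam)) * (p x * q x) = q x - (1 - lam) * (p x * q x) := by
          field_simp
        linarith
      rw [mul_div_assoc'] at *
      rw [div_eq_div_iff hP1' hQ1']
      linear_combination (-lam) * hkey
  set v : ℝ → ℝ := fun x => w x ^ (1 / lam) with hv
  have key1 : ∀ b : ℝ, lux q (indicator (Ioo (0:ℝ) b) w) =
      (lux (fun x => lam * q x) (indicator (Ioo (0:ℝ) b) v)) ^ lam := by
    intro b
    unfold lux
    rw [key_rpow' lam hlam q (fun x hx => (hqpos x hx).le)]
    congr 1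
    apply eLux_congr' (fun x _ => rfl)
    intro x hx
    by_cases hxb : x ∈ Ioo (0:ℝ) b
    · have hw0 : 0 ≤ w x := hw.2.1 x hxb.1
      simp only [indicator_of_mem hxb, hv]
      rw [abs_of_nonneg hw0, abs_of_nonneg (Real.rpow_nonneg hw0 _),
        ENNReal.ofReal_rpow_of_nonneg hw0 (by positivity)]
    · have hz : (0:ℝ≥0∞) ^ (1/lam) = 0 := ENNReal.zero_rpow_of_pos (by positivity)
      simp [indicator_of_notMem hxb, hz, hlam]
  have key2 : ∀ b : ℝ, lux (conj p) (indicator (Ioo (0:ℝ) b) (fun y => (w y)⁻¹)) =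
      (lux (conj (fun x => lam * q x)) (indicator (Ioo (0:ℝ) b) (fun y => (v y)⁻¹))) ^ lam := by
    intro b
    unfold lux
    have hc0 : ∀ x ∈ Ioi (0:ℝ), 0 ≤ conj p x := by
      intro x hx
      have := hp1 x hx
      exact div_nonneg (by linarith) (by linarith)
    rw [key_rpow' lam hlam (conj p) hc0]
    congr 1
    apply eLux_congr' hconjEq
    intro x hx
    by_cases hxb : x ∈ Ioo (0:ℝ) b
    · have hw0 : 0 ≤ w x := hw.2.1 x hxb.1
      simp only [indicator_of_mem hxb, hv]
      rw [abs_of_nonneg (inv_nonneg.mpr hw0),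
        abs_of_nonneg (inv_nonneg.mpr (Real.rpow_nonneg hw0 _)),
        ENNReal.ofReal_rpow_of_nonneg (inv_nonneg.mpr hw0) (by positivity),
        ← Real.inv_rpow hw0]
    · have hz : (0:ℝ≥0∞) ^ (1/lam) = 0 := ENNReal.zero_rpow_of_pos (by positivity)
      simp [indicator_of_notMem hxb, hz, hlam]
  unfold Ap0 Apq0
  constructor
  · rintro ⟨C, hC, h⟩
    refine ⟨C ^ (1/lam), Real.rpow_pos_of_pos hC _, fun b hb => ?_⟩
    have h1 := h b hb
    rw [key1 b, key2 b, ← ENNReal.mul_rpow_of_nonneg _ _ hlam.le] at h1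
    have h2 := ENNReal.rpow_le_rpow h1 (by positivity : (0:ℝ) ≤ 1/lam)
    rw [← ENNReal.rpow_mul, mul_one_div_cancel hlam.ne', ENNReal.rpow_one,
      ENNReal.ofReal_rpow_of_nonneg (by positivity) (by positivity)] at h2
    have heq : (C * b ^ lam) ^ (1/lam) = C ^ (1/lam) * b ^ (1:ℝ) := by
      rw [Real.mul_rpow hC.le (Real.rpow_nonneg hb.le _), ← Real.rpow_mul hb.le,
        mul_one_div_cancel hlam.ne', Real.rpow_one]
    rwa [heq] at h2
  · rintro ⟨C, hC, h⟩
    refine ⟨C ^ lam, Real.rpow_pos_of_pos hC _, fun b hb => ?_⟩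
    have h1 := h b hb
    have h2 := ENNReal.rpow_le_rpow h1 hlam.le
    rw [ENNReal.ofReal_rpow_of_nonneg (by positivity) hlam.le] at h2
    have heq : (C * b ^ (1:ℝ)) ^ lam = C ^ lam * b ^ lam := by
      rw [Real.rpow_one, Real.mul_rpow hC.le hb.le]
    rw [heq] at h2
    rw [key1 b, key2 b, ← ENNReal.mul_rpow_of_nonneg _ _ hlam.le]
    exact h2

end
end

section
/- Let p(·) ∈ P(0,∞), 0<λ<1 with p⁺<1/(1−λ), and define q(·) by 1/q(x)=1/p(x)−(1−λ). Let w be a weight on (0,∞) and let f be a non-negative measurable function with ∫₀^∞ f(y)^{p(y)}dy < ∞. Set g(y)=f(y)^{p(y)/q(y)}w(y)^{−1}. Then for every x ∈ (0,∞), S_λ(f/w)(x) ≤ [S(g^{1/λ})(x)]^λ · (∫₀^∞ f(y)^{p(y)}dy)^{1−λ}, where S=S₁ is the Stieltjes transform with λ=1. -/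
open MeasureTheory Set ENNReal Real

noncomputable section

theorem statement14 (lam : ℝ) (hlam : 0 < lam) (hlam1 : lam < 1)
    (p q w f : ℝ → ℝ) (hp : IsExponent p) (hpp : (1 - lam) * pPlus p < 1)
    (hq : ∀ x ∈ Ioi (0:ℝ), 1 / q x = 1 / p x - (1 - lam))
    (hw : IsWeight w) (hf : Measurable f) (hf0 : ∀ y ∈ Ioi (0:ℝ), 0 ≤ f y)
    (hI : (∫⁻ y in Ioi (0:ℝ), ENNReal.ofReal (f y ^ p y)) ≠ ∞) :
    ∀ x ∈ Ioi (0:ℝ),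
      opS lam (fun y => f y / w y) x ≤
        (opS 1 (fun y => (f y ^ (p y / q y) * (w y)⁻¹) ^ (1 / lam)) x) ^ lam *
          (∫⁻ y in Ioi (0:ℝ), ENNReal.ofReal (f y ^ p y)) ^ (1 - lam) := by
  intro x hx
  have hx0 : (0:ℝ) < x := hx
  set r : ℝ → ℝ := fun y => 1 - (1 - lam) * p y with hrdef
  -- p y / q y = r y on Ioi 0
  have hpqr : ∀ y ∈ Ioi (0:ℝ), p y / q y = r y := by
    intro y hy
    have hp1 : 1 ≤ p y := hp.2.1 y hy
    have hpne : p y ≠ 0 := by linarith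
    have h := hq y hy
    have : p y / q y = p y * (1 / q y) := by
      rw [div_eq_mul_inv, one_div]
    rw [this, h, mul_sub, mul_one_div, div_self hpne, hrdef]
    ring
  -- measurable auxiliary functions
  set Φ : ℝ → ℝ≥0∞ := fun y =>
    ENNReal.ofReal (|(f y ^ r y * (w y)⁻¹) ^ (1 / lam)| / (x + y)) with hΦdef
  set Ψ : ℝ → ℝ≥0∞ := fun y => ENNReal.ofReal (f y ^ p y) with hΨdef
  have hr_meas : Measurable r := measurable_const.sub (measurable_const.mul hp.1)
  have hΦmeas : Measurable Φ := by
    apply Measurable.ennreal_ofReal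
    exact (((((hf.pow hr_meas).mul hw.1.inv).pow measurable_const).abs).div
      (measurable_const.add measurable_id))
  have hΨmeas : Measurable Ψ := (hf.pow hp.1).ennreal_ofReal
  have h1lam : (0:ℝ) ≤ 1 - lam := by linarith
  -- Step 1: pointwise bound
  have step1 : opS lam (fun y => f y / w y) x ≤
      ∫⁻ y in Ioi (0:ℝ), Φ y ^ lam * Ψ y ^ (1 - lam) := by
    rw [opS]
    refine lintegral_mono_ae ((ae_restrict_iff' measurableSet_Ioi).2 (ae_of_all _ ?_))
    intro y hy
    have hy0 : (0:ℝ) < y := hy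
    have hF : 0 ≤ f y := hf0 y hy
    have ha : (0:ℝ) < x + y := by linarith
    rcases (hw.2.1 y hy).eq_or_lt with hW | hW
    · -- w y = 0
      have h0 : f y / w y = 0 := by rw [← hW]; exact div_zero _
      simp [h0]
    · -- w y > 0 : equality
      have hbase : 0 ≤ f y ^ r y * (w y)⁻¹ :=
        mul_nonneg (Real.rpow_nonneg hF _) (inv_nonneg.2 hW.le)
      have habs : |(f y ^ r y * (w y)⁻¹) ^ (1 / lam)|
          = (f y ^ r y * (w y)⁻¹) ^ (1 / lam) :=
        abs_of_nonneg (Real.rpow_nonneg hbase _)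
      have h1 : Φ y ^ lam = ENNReal.ofReal (f y ^ r y * (w y)⁻¹ / (x + y) ^ lam) := by
        rw [hΦdef]
        simp only
        rw [habs, ENNReal.ofReal_rpow_of_nonneg
          (div_nonneg (Real.rpow_nonneg hbase _) ha.le) hlam.le,
          Real.div_rpow (Real.rpow_nonneg hbase _) ha.le,
          ← Real.rpow_mul hbase,
          one_div, inv_mul_cancel₀ hlam.ne', Real.rpow_one]
      have h2 : Ψ y ^ (1 - lam) = ENNReal.ofReal (f y ^ (p y * (1 - lam))) := by
        rw [hΨdef]
        simp only
        rw [ENNReal.ofReal_rpow_of_nonneg (Real.rpow_nonneg hF _) h1lam,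
          ← Real.rpow_mul hF]
      have hsum : r y + p y * (1 - lam) = 1 := by rw [hrdef]; ring
      have hprod : f y ^ r y * (w y)⁻¹ / (x + y) ^ lam * f y ^ (p y * (1 - lam))
          = |f y / w y| / (x + y) ^ lam := by
        have h3 : f y ^ r y * f y ^ (p y * (1 - lam)) = f y := by
          rw [← Real.rpow_add' hF (by rw [hsum]; norm_num), hsum, Real.rpow_one]
        rw [abs_of_nonneg (div_nonneg hF hW.le)]
        field_simp
        nlinarith [h3]
      rw [h1, h2, ← ENNReal.ofReal_mul
        (div_nonneg hbase (Real.rpow_nonneg ha.le _)), hprod]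
  -- Step 2: Hölder
  have hconj : (1 / lam).HolderConjugate (1 / (1 - lam)) := by
    exact Real.holderConjugate_one_div hlam (by linarith) (by ring)
  have step2 : (∫⁻ y in Ioi (0:ℝ), Φ y ^ lam * Ψ y ^ (1 - lam)) ≤
      (∫⁻ y in Ioi (0:ℝ), Φ y) ^ lam * (∫⁻ y in Ioi (0:ℝ), Ψ y) ^ (1 - lam) := by
    have h := ENNReal.lintegral_mul_le_Lp_mul_Lq (volume.restrict (Ioi (0:ℝ)))
      hconj (f := fun y => Φ y ^ lam) (g := fun y => Ψ y ^ (1 - lam))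
      ((hΦmeas.pow measurable_const).aemeasurable)
      ((hΨmeas.pow measurable_const).aemeasurable)
    simp only [Pi.mul_apply] at h
    have e1 : ∀ y : ℝ, (Φ y ^ lam) ^ (1 / lam : ℝ) = Φ y := by
      intro y
      rw [← ENNReal.rpow_mul, mul_one_div, div_self hlam.ne', ENNReal.rpow_one]
    have e2 : ∀ y : ℝ, (Ψ y ^ (1 - lam)) ^ (1 / (1 - lam) : ℝ) = Ψ y := by
      intro y
      rw [← ENNReal.rpow_mul, mul_one_div, div_self (by linarith : (1:ℝ) - lam ≠ 0),
        ENNReal.rpow_one]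
    simp only [e1, e2, one_div_one_div] at h
    calc (∫⁻ y in Ioi (0:ℝ), Φ y ^ lam * Ψ y ^ (1 - lam)) ≤
        (∫⁻ y in Ioi (0:ℝ), Φ y) ^ ((1:ℝ) / (1 / lam)) *
          (∫⁻ y in Ioi (0:ℝ), Ψ y) ^ ((1:ℝ) / (1 / (1 - lam))) := by
          simpa [one_div_one_div] using h
      _ = _ := by rw [one_div_one_div, one_div_one_div]
  -- Identify ∫ Φ with opS 1 g x
  have hΦint : (∫⁻ y in Ioi (0:ℝ), Φ y) =
      opS 1 (fun y => (f y ^ (p y / q y) * (w y)⁻¹) ^ (1 / lam)) x := by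
    rw [opS]
    refine setLIntegral_congr_fun measurableSet_Ioi ?_
    intro y hy
    rw [hΦdef]
    simp only
    rw [hpqr y hy, Real.rpow_one]
  calc opS lam (fun y => f y / w y) x
      ≤ ∫⁻ y in Ioi (0:ℝ), Φ y ^ lam * Ψ y ^ (1 - lam) := step1
    _ ≤ (∫⁻ y in Ioi (0:ℝ), Φ y) ^ lam * (∫⁻ y in Ioi (0:ℝ), Ψ y) ^ (1 - lam) := step2
    _ = _ := by rw [hΦint]

end
end
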